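/- arXiv:2211.07694 — 4 statements merged into one kernel-verified Lean document; each statement's English description precedes it below -/
import Mathlib

section
/- Let α : [0,1] → [0,∞) be nondecreasing and bounded. Then the spectral risk measure R_α is concave on the set of Borel probability measures on ℝ with finite first moment: for all such μ_0, μ_1 and t ∈ [0,1], R_α((1-t)μ_0 + t μ_1) ≥ (1-t) R_α(μ_0) + t R_α(μ_1). -/
open MeasureTheory Set Filter Function Topology
open scoped ENNReal

/-- Quantile (generalized inverse c.d.f.) of a probability measure on ℝ. -/
noncomputable def quantile (μ : Measure ℝ) (m : ℝ) : ℝ :=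
  sInf {x : ℝ | ENNReal.ofReal m ≤ μ (Iic x)}

/-- The spectral risk measure `R_α(μ) = ∫_0^1 F_μ⁻¹(m) α(m) dm`. -/
noncomputable def specRisk (α : ℝ → ℝ) (μ : Measure ℝ) : ℝ :=
  ∫ m in Icc (0:ℝ) 1, quantile μ m * α m

namespace SRM

lemma qset_nonempty (μ : Measure ℝ) [IsProbabilityMeasure μ] {m : ℝ} (hm : m < 1) :
    {x : ℝ | ENNReal.ofReal m ≤ μ (Iic x)}.Nonempty := by
  have h1 : ENNReal.ofReal m < 1 := ENNReal.ofReal_lt_one.2 hm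
  have h2 := tendsto_measure_Iic_atTop (α := ℝ) μ
  rw [measure_univ] at h2
  have h3 : ∀ᶠ x : ℝ in atTop, ENNReal.ofReal m < μ (Iic x) :=
    h2.eventually_const_lt h1
  obtain ⟨x, hx⟩ := h3.exists
  exact ⟨x, hx.le⟩

lemma qset_bddBelow (μ : Measure ℝ) [IsProbabilityMeasure μ] {m : ℝ} (hm : 0 < m) :
    BddBelow {x : ℝ | ENNReal.ofReal m ≤ μ (Iic x)} := by
  have h0 : Tendsto (fun n : ℕ => μ (Iic (-(n:ℝ)))) atTop (𝓝 (μ (⋂ n : ℕ, Iic (-(n:ℝ))))) := by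
    refine tendsto_measure_iInter_atTop (fun n => measurableSet_Iic.nullMeasurableSet)
      (fun a b hab => Iic_subset_Iic.2 (neg_le_neg (Nat.cast_le.2 hab)))
      ⟨0, measure_ne_top _ _⟩
  have hempty : (⋂ n : ℕ, Iic (-(n:ℝ))) = ∅ := by
    ext x
    simp only [mem_iInter, mem_Iic, mem_empty_iff_false, iff_false, not_forall, not_le]
    obtain ⟨n, hn⟩ := exists_nat_gt (-x)
    exact ⟨n, by linarith⟩
  rw [hempty, measure_empty] at h0
  have h1 : ∀ᶠ n : ℕ in atTop, μ (Iic (-(n:ℝ))) < ENNReal.ofReal m :=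
    h0.eventually_lt_const (ENNReal.ofReal_pos.2 hm)
  obtain ⟨n, hn⟩ := h1.exists
  refine ⟨-(n:ℝ), fun y hy => ?_⟩
  by_contra h
  push_neg at h
  exact absurd (le_trans hy (measure_mono (Iic_subset_Iic.2 h.le))) (not_le.2 hn)

lemma quantile_le_iff (μ : Measure ℝ) [IsProbabilityMeasure μ] {m x : ℝ} (hm : m ∈ Ioo (0:ℝ) 1) :
    quantile μ m ≤ x ↔ ENNReal.ofReal m ≤ μ (Iic x) := by
  constructor
  · intro h
    have key : ∀ δ : ℝ, 0 < δ → ENNReal.ofReal m ≤ μ (Iic (x + δ)) := by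
      intro δ hδ
      obtain ⟨y, hy, hylt⟩ := Real.lt_sInf_add_pos (qset_nonempty μ hm.2) hδ
      exact le_trans hy (measure_mono (Iic_subset_Iic.2 (by
        have : sInf {x : ℝ | ENNReal.ofReal m ≤ μ (Iic x)} ≤ x := h
        linarith)))
    have h0 : Tendsto (fun n : ℕ => μ (Iic (x + ((n:ℝ)+1)⁻¹))) atTop (𝓝 (μ (Iic x))) := by
      have h1 : Tendsto (fun n : ℕ => μ (Iic (x + ((n:ℝ)+1)⁻¹))) atTop
          (𝓝 (μ (⋂ n : ℕ, Iic (x + ((n:ℝ)+1)⁻¹)))) := by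
        refine tendsto_measure_iInter_atTop (fun n => measurableSet_Iic.nullMeasurableSet)
          (fun a b hab => Iic_subset_Iic.2 (by
            have : ((b:ℝ)+1)⁻¹ ≤ ((a:ℝ)+1)⁻¹ := by
              apply inv_anti₀ (by positivity)
              exact add_le_add_left (Nat.cast_le.2 hab) 1
            linarith)) ⟨0, measure_ne_top _ _⟩
      have h2 : (⋂ n : ℕ, Iic (x + ((n:ℝ)+1)⁻¹)) = Iic x := by
        ext y
        simp only [mem_iInter, mem_Iic]
        constructor
        · intro hy
          refine le_of_forall_pos_le_add fun ε hε => ?_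
          obtain ⟨n, hn⟩ := exists_nat_gt ε⁻¹
          have hn' : ((n:ℝ)+1)⁻¹ < ε := by
            rw [inv_lt_comm₀ (by positivity) hε]
            linarith
          linarith [hy n]
        · intro hy n
          have : (0:ℝ) < ((n:ℝ)+1)⁻¹ := by positivity
          linarith
      rwa [h2] at h1
    exact ge_of_tendsto h0 (Eventually.of_forall fun n => key (((n:ℝ)+1)⁻¹) (by positivity))
  · intro h
    exact csInf_le (qset_bddBelow μ hm.1) h

lemma quantile_mem (μ : Measure ℝ) [IsProbabilityMeasure μ] {m : ℝ} (hm : m ∈ Ioo (0:ℝ) 1) :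
    ENNReal.ofReal m ≤ μ (Iic (quantile μ m)) :=
  (quantile_le_iff μ hm).1 le_rfl

lemma quantile_monotoneOn (μ : Measure ℝ) [IsProbabilityMeasure μ] :
    MonotoneOn (quantile μ) (Ioo (0:ℝ) 1) := by
  intro a ha b hb hab
  refine (quantile_le_iff μ ha).2 (le_trans ?_ (quantile_mem μ hb))
  exact ENNReal.ofReal_le_ofReal hab


/-- Lebesgue measure restricted to `(0,1)`. -/
noncomputable def P : Measure ℝ := volume.restrict (Ioo (0:ℝ) 1)

instance : IsProbabilityMeasure P :=
  ⟨by rw [P, Measure.restrict_apply_univ, Real.volume_Ioo]; norm_num⟩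

/-- Indicator-truncated quantile function. -/
noncomputable def Q (μ : Measure ℝ) : ℝ → ℝ := (Ioo (0:ℝ) 1).indicator (quantile μ)

lemma Q_preimage_Iic (μ : Measure ℝ) [IsProbabilityMeasure μ] (x : ℝ) :
    Q μ ⁻¹' Iic x =
      (Ioo (0:ℝ) 1 ∩ Iic (μ (Iic x)).toReal) ∪ ((Ioo (0:ℝ) 1)ᶜ ∩ {m : ℝ | (0:ℝ) ≤ x}) := by
  ext m
  by_cases hm : m ∈ Ioo (0:ℝ) 1
  · simp only [mem_preimage, mem_Iic, Q, indicator_of_mem hm, mem_union, mem_inter_iff, hm,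
      true_and, mem_compl_iff, not_true, false_and, or_false, mem_setOf_eq]
    rw [quantile_le_iff μ hm,
      ENNReal.ofReal_le_iff_le_toReal (measure_ne_top μ _)]
  · simp only [mem_preimage, mem_Iic, Q, indicator_of_notMem hm, mem_union, mem_inter_iff, hm,
      false_and, false_or, mem_compl_iff, not_false_iff, true_and, mem_setOf_eq]

lemma measurable_Q (μ : Measure ℝ) [IsProbabilityMeasure μ] : Measurable (Q μ) := by
  refine measurable_of_Iic fun x => ?_
  rw [Q_preimage_Iic]
  by_cases hx : (0:ℝ) ≤ x
  · have : {m : ℝ | (0:ℝ) ≤ x} = univ := eq_univ_of_forall fun _ => hx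
    rw [this]
    exact ((measurableSet_Ioo.inter measurableSet_Iic).union
      (measurableSet_Ioo.compl.inter MeasurableSet.univ))
  · have : {m : ℝ | (0:ℝ) ≤ x} = ∅ := eq_empty_of_forall_notMem fun _ => hx
    rw [this, inter_empty, union_empty]
    exact measurableSet_Ioo.inter measurableSet_Iic

lemma map_Q (μ : Measure ℝ) [IsProbabilityMeasure μ] : Measure.map (Q μ) P = μ := by
  haveI : IsProbabilityMeasure (Measure.map (Q μ) P) :=
    Measure.isProbabilityMeasure_map (measurable_Q μ).aemeasurable
  refine Measure.ext_of_Iic _ _ fun x => ?_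
  rw [Measure.map_apply (measurable_Q μ) measurableSet_Iic, P,
    Measure.restrict_apply (measurable_Q μ measurableSet_Iic)]
  set c : ℝ := (μ (Iic x)).toReal with hc
  have hc0 : 0 ≤ c := ENNReal.toReal_nonneg
  have hc1 : c ≤ 1 := by
    rw [hc, show (1:ℝ) = (1:ℝ≥0∞).toReal by simp]
    exact ENNReal.toReal_mono ENNReal.one_ne_top prob_le_one
  have hsub : Q μ ⁻¹' Iic x ∩ Ioo 0 1 = Ioo (0:ℝ) 1 ∩ Iic c := by
    rw [Q_preimage_Iic]
    ext y
    simp only [mem_inter_iff, mem_union, mem_compl_iff, mem_Ioo, mem_Iic, mem_setOf_eq]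
    tauto
  rw [hsub]
  have h1 : volume (Ioo (0:ℝ) c) ≤ volume (Ioo (0:ℝ) 1 ∩ Iic c) := by
    apply measure_mono
    intro y hy
    exact ⟨⟨hy.1, lt_of_lt_of_le hy.2 hc1⟩, hy.2.le⟩
  have h2 : volume (Ioo (0:ℝ) 1 ∩ Iic c) ≤ volume (Ioc (0:ℝ) c) := by
    apply measure_mono
    intro y hy
    exact ⟨hy.1.1, hy.2⟩
  rw [Real.volume_Ioo, sub_zero] at h1
  rw [Real.volume_Ioc, sub_zero] at h2
  have : volume (Ioo (0:ℝ) 1 ∩ Iic c) = ENNReal.ofReal c := le_antisymm h2 h1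
  rw [this, hc, ENNReal.ofReal_toReal (measure_ne_top μ _)]

lemma integral_Q (μ : Measure ℝ) [IsProbabilityMeasure μ] {f : ℝ → ℝ} (hf : Measurable f) :
    ∫ m, f (Q μ m) ∂P = ∫ y, f y ∂μ := by
  have h := integral_map (μ := P) (measurable_Q μ).aemeasurable hf.aestronglyMeasurable
  rw [map_Q] at h
  exact h.symm

lemma integrable_comp_Q (μ : Measure ℝ) [IsProbabilityMeasure μ] {f : ℝ → ℝ}
    (hf : Measurable f) (hi : Integrable f μ) : Integrable (fun m => f (Q μ m)) P := by
  have h := integrable_map_measure (μ := P) hf.aestronglyMeasurable (measurable_Q μ).aemeasurable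
  rw [map_Q] at h
  exact h.1 hi

lemma integrable_Q (μ : Measure ℝ) [IsProbabilityMeasure μ]
    (hμ : Integrable (fun y : ℝ => y) μ) : Integrable (Q μ) P := by
  simpa using integrable_comp_Q μ measurable_id hμ


/-- `H s μ = ∫_{(s,1)} quantile μ`. -/
noncomputable def H (s : ℝ) (μ : Measure ℝ) : ℝ := ∫ m in Ioo s 1, quantile μ m

lemma H_eq (μ : Measure ℝ) {s : ℝ} (hs : s ∈ Ioc (0:ℝ) 1) :
    H s μ = ∫ m in Ioo s 1, Q μ m := by
  refine setIntegral_congr_fun measurableSet_Ioo fun m hm => ?_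
  exact (indicator_of_mem (mem_Ioo.2 ⟨lt_trans hs.1 hm.1, hm.2⟩) _).symm

lemma integrableOn_Q_sub (μ : Measure ℝ) [IsProbabilityMeasure μ]
    (hμ : Integrable (fun y : ℝ => y) μ) {s : ℝ} (hs : s ∈ Ioc (0:ℝ) 1) :
    IntegrableOn (Q μ) (Ioo s 1) volume := by
  have h : IntegrableOn (Q μ) (Ioo (0:ℝ) 1) volume := integrable_Q μ hμ
  exact h.mono_set (Ioo_subset_Ioo hs.1.le le_rfl)

lemma maxint (μ : Measure ℝ) [IsProbabilityMeasure μ] (hμ : Integrable (fun y : ℝ => y) μ) (x : ℝ) :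
    Integrable (fun y : ℝ => max (y - x) 0) μ :=
  (hμ.sub (integrable_const x)).pos_part

lemma maxmeas (x : ℝ) : Measurable (fun y : ℝ => max (y - x) 0) :=
  (measurable_id.sub measurable_const).max measurable_const

lemma integral_max_Q (μ : Measure ℝ) [IsProbabilityMeasure μ] (x : ℝ) :
    ∫ m in Ioo (0:ℝ) 1, max (Q μ m - x) 0 = ∫ y, max (y - x) 0 ∂μ :=
  integral_Q μ (f := fun y => max (y - x) 0) (maxmeas x)

lemma integrable_max_Q (μ : Measure ℝ) [IsProbabilityMeasure μ]
    (hμ : Integrable (fun y : ℝ => y) μ) (x : ℝ) :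
    IntegrableOn (fun m => max (Q μ m - x) 0) (Ioo (0:ℝ) 1) volume :=
  integrable_comp_Q μ (f := fun y => max (y - x) 0) (maxmeas x) (maxint μ hμ x)

lemma vol_Ioo {s : ℝ} (hs : s ≤ 1) : (volume (Ioo s (1:ℝ))).toReal = 1 - s := by
  rw [Real.volume_Ioo, ENNReal.toReal_ofReal (by linarith)]

lemma cvar_le (μ : Measure ℝ) [IsProbabilityMeasure μ] (hμ : Integrable (fun y : ℝ => y) μ)
    {s : ℝ} (hs : s ∈ Ioc (0:ℝ) 1) (x : ℝ) :
    H s μ ≤ (1 - s) * x + ∫ y, max (y - x) 0 ∂μ := by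
  have hQs : IntegrableOn (Q μ) (Ioo s 1) volume := integrableOn_Q_sub μ hμ hs
  have h1 : H s μ = (∫ m in Ioo s 1, (Q μ m - x)) + (1 - s) * x := by
    rw [H_eq μ hs, integral_sub hQs (integrableOn_const measure_Ioo_lt_top.ne),
      setIntegral_const, measureReal_def, vol_Ioo hs.2, smul_eq_mul]
    ring
  have h2 : (∫ m in Ioo s 1, (Q μ m - x)) ≤ ∫ m in Ioo s 1, max (Q μ m - x) 0 := by
    refine setIntegral_mono_on (hQs.sub (integrableOn_const measure_Ioo_lt_top.ne))
      ((integrable_max_Q μ hμ x).mono_set (Ioo_subset_Ioo hs.1.le le_rfl))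
      measurableSet_Ioo fun m _ => le_max_left _ _
  have h3 : (∫ m in Ioo s 1, max (Q μ m - x) 0) ≤ ∫ m in Ioo (0:ℝ) 1, max (Q μ m - x) 0 := by
    refine setIntegral_mono_set (integrable_max_Q μ hμ x)
      (Eventually.of_forall fun m => le_max_right _ _)
      (HasSubset.Subset.eventuallyLE (Ioo_subset_Ioo hs.1.le le_rfl))
  rw [integral_max_Q μ x] at h3
  linarith

lemma cvar_eq (μ : Measure ℝ) [IsProbabilityMeasure μ] (hμ : Integrable (fun y : ℝ => y) μ)
    {s : ℝ} (hs : s ∈ Ioo (0:ℝ) 1) :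
    H s μ = (1 - s) * quantile μ s + ∫ y, max (y - quantile μ s) 0 ∂μ := by
  set xs := quantile μ s with hxs
  have hsplit : Ioo (0:ℝ) 1 = Ioo 0 s ∪ Ico s 1 := (Ioo_union_Ico_eq_Ioo hs.1 hs.2.le).symm
  have hdisj : Disjoint (Ioo (0:ℝ) s) (Ico s 1) :=
    Set.disjoint_left.2 fun a ha hb => absurd hb.1 (not_le.2 ha.2)
  have hInt := integrable_max_Q μ hμ xs
  have hint1 : IntegrableOn (fun m => max (Q μ m - xs) 0) (Ioo (0:ℝ) s) volume :=
    hInt.mono_set (by rw [hsplit]; exact subset_union_left)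
  have hint2 : IntegrableOn (fun m => max (Q μ m - xs) 0) (Ico s 1) volume :=
    hInt.mono_set (by rw [hsplit]; exact subset_union_right)
  have e1 : ∫ y, max (y - xs) 0 ∂μ = (∫ m in Ioo (0:ℝ) s, max (Q μ m - xs) 0)
      + ∫ m in Ico s 1, max (Q μ m - xs) 0 := by
    rw [← integral_max_Q μ xs, hsplit]
    exact setIntegral_union hdisj measurableSet_Ico hint1 hint2
  have e2 : (∫ m in Ioo (0:ℝ) s, max (Q μ m - xs) 0) = 0 := by
    rw [setIntegral_congr_fun measurableSet_Ioo (g := fun _ => (0:ℝ)) ?_, integral_const,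
      smul_eq_mul, mul_zero]
    intro m hm
    have hm1 : m ∈ Ioo (0:ℝ) 1 := ⟨hm.1, lt_trans hm.2 hs.2⟩
    have : quantile μ m ≤ xs := quantile_monotoneOn μ hm1 hs hm.2.le
    simp only [Q, indicator_of_mem hm1]
    exact max_eq_right (by linarith)
  have e3 : (∫ m in Ico s 1, max (Q μ m - xs) 0) = ∫ m in Ico s 1, (Q μ m - xs) := by
    refine setIntegral_congr_fun measurableSet_Ico fun m hm => ?_
    have hm1 : m ∈ Ioo (0:ℝ) 1 := ⟨lt_of_lt_of_le hs.1 hm.1, hm.2⟩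
    have : xs ≤ quantile μ m := quantile_monotoneOn μ hs hm1 hm.1
    simp only [Q, indicator_of_mem hm1]
    exact max_eq_left (by linarith)
  have e4 : (∫ m in Ico s 1, (Q μ m - xs)) = ∫ m in Ioo s 1, (Q μ m - xs) :=
    integral_Ico_eq_integral_Ioo
  have e5 : (∫ m in Ioo s 1, (Q μ m - xs)) = H s μ - (1 - s) * xs := by
    rw [H_eq μ ⟨hs.1, hs.2.le⟩,
      integral_sub (integrableOn_Q_sub μ hμ ⟨hs.1, hs.2.le⟩)
        (integrableOn_const measure_Ioo_lt_top.ne),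
      setIntegral_const, measureReal_def, vol_Ioo hs.2.le, smul_eq_mul]
  rw [e1, e2, e3, e4, e5]
  ring

section Mix

variable (μ₀ μ₁ : Measure ℝ) [IsProbabilityMeasure μ₀] [IsProbabilityMeasure μ₁]

lemma prob_mix {t : ℝ} (ht : t ∈ Icc (0:ℝ) 1) :
    IsProbabilityMeasure (ENNReal.ofReal (1 - t) • μ₀ + ENNReal.ofReal t • μ₁) := by
  constructor
  simp only [Measure.coe_add, Pi.add_apply, Measure.smul_apply, measure_univ,
    smul_eq_mul, mul_one]
  rw [← ENNReal.ofReal_add (by linarith [ht.2]) ht.1]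
  norm_num

lemma integrable_mix {t : ℝ} {f : ℝ → ℝ} (h0 : Integrable f μ₀) (h1 : Integrable f μ₁) :
    Integrable f (ENNReal.ofReal (1 - t) • μ₀ + ENNReal.ofReal t • μ₁) :=
  Integrable.add_measure (h0.smul_measure ENNReal.ofReal_ne_top)
    (h1.smul_measure ENNReal.ofReal_ne_top)

lemma integral_mix {t : ℝ} (ht : t ∈ Icc (0:ℝ) 1) {f : ℝ → ℝ}
    (h0 : Integrable f μ₀) (h1 : Integrable f μ₁) :
    ∫ y, f y ∂(ENNReal.ofReal (1 - t) • μ₀ + ENNReal.ofReal t • μ₁)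
      = (1 - t) * ∫ y, f y ∂μ₀ + t * ∫ y, f y ∂μ₁ := by
  rw [integral_add_measure (h0.smul_measure ENNReal.ofReal_ne_top)
    (h1.smul_measure ENNReal.ofReal_ne_top), integral_smul_measure, integral_smul_measure,
    ENNReal.toReal_ofReal (by linarith [ht.2] : (0:ℝ) ≤ 1 - t), ENNReal.toReal_ofReal ht.1,
    smul_eq_mul, smul_eq_mul]

lemma H_concave {t : ℝ} (ht : t ∈ Icc (0:ℝ) 1)
    (hμ₀ : Integrable (fun y : ℝ => y) μ₀) (hμ₁ : Integrable (fun y : ℝ => y) μ₁)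
    {s : ℝ} (hs : s ∈ Ioo (0:ℝ) 1) :
    (1 - t) * H s μ₀ + t * H s μ₁
      ≤ H s (ENNReal.ofReal (1 - t) • μ₀ + ENNReal.ofReal t • μ₁) := by
  haveI := prob_mix μ₀ μ₁ ht
  set ν := ENNReal.ofReal (1 - t) • μ₀ + ENNReal.ofReal t • μ₁ with hν
  have hμt : Integrable (fun y : ℝ => y) ν := integrable_mix μ₀ μ₁ hμ₀ hμ₁
  set xs := quantile ν s with hxs
  have e := cvar_eq ν hμt hs
  have emix : ∫ y, max (y - xs) 0 ∂ν
      = (1-t) * ∫ y, max (y - xs) 0 ∂μ₀ + t * ∫ y, max (y - xs) 0 ∂μ₁ :=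
    integral_mix μ₀ μ₁ ht (maxint μ₀ hμ₀ xs) (maxint μ₁ hμ₁ xs)
  have l0 := cvar_le μ₀ hμ₀ ⟨hs.1, hs.2.le⟩ xs
  have l1 := cvar_le μ₁ hμ₁ ⟨hs.1, hs.2.le⟩ xs
  have h0 := mul_le_mul_of_nonneg_left l0 (by linarith [ht.2] : (0:ℝ) ≤ 1 - t)
  have h1 := mul_le_mul_of_nonneg_left l1 ht.1
  have key : (1-t) * ((1-s)*xs + ∫ y, max (y - xs) 0 ∂μ₀)
      + t * ((1-s)*xs + ∫ y, max (y - xs) 0 ∂μ₁) = H s ν := by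
    rw [e, emix]; ring
  linarith

end Mix

section Alpha

variable (f : StieltjesFunction ℝ)

/-- The Stieltjes measure of the spectral function, restricted to `(0,1]`. -/
noncomputable def nur (f : StieltjesFunction ℝ) : Measure ℝ := f.measure.restrict (Ioc (0:ℝ) 1)

instance : IsFiniteMeasure (nur f) := by
  constructor
  rw [nur, Measure.restrict_apply_univ, f.measure_Ioc]
  exact ENNReal.ofReal_lt_top

lemma K_eq (μ : Measure ℝ) :
    (fun p : ℝ × ℝ => Q μ p.1 * (Iic p.1).indicator (fun _ => (1:ℝ)) p.2)
      = {p : ℝ × ℝ | p.2 ≤ p.1}.indicator (fun p => Q μ p.1) := by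
  funext p
  by_cases h : p.2 ≤ p.1 <;> simp [indicator, h, mem_setOf_eq]

lemma K_int (μ : Measure ℝ) [IsProbabilityMeasure μ] (hμ : Integrable (fun y : ℝ => y) μ) :
    Integrable (fun p : ℝ × ℝ => Q μ p.1 * (Iic p.1).indicator (fun _ => (1:ℝ)) p.2)
      (P.prod (nur f)) := by
  rw [K_eq]
  refine Integrable.indicator ?_ (measurableSet_le measurable_snd measurable_fst)
  have h : Integrable (fun p : ℝ × ℝ => Q μ p.1 * (1:ℝ)) (P.prod (nur f)) :=
    (integrable_Q μ hμ).mul_prod (integrable_const 1)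
  simpa using h

lemma inner_left (μ : Measure ℝ) (m : ℝ) (hm : m ∈ Ioo (0:ℝ) 1) :
    ∫ s, Q μ m * (Iic m).indicator (fun _ => (1:ℝ)) s ∂(nur f) = Q μ m * (f m - f 0) := by
  rw [integral_const_mul, integral_indicator_const (1:ℝ) measurableSet_Iic]
  have h1 : nur f (Iic m) = f.measure (Ioc 0 m) := by
    rw [nur, Measure.restrict_apply measurableSet_Iic]
    congr 1
    ext x
    simp only [mem_inter_iff, mem_Iic, mem_Ioc]
    exact ⟨fun h => ⟨h.2.1, h.1⟩, fun h => ⟨h.2, h.1, le_trans h.2 hm.2.le⟩⟩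
  rw [measureReal_def, h1, f.measure_Ioc, smul_eq_mul, mul_one,
    ENNReal.toReal_ofReal (sub_nonneg.2 (f.mono hm.1.le))]

lemma inner_right (μ : Measure ℝ) (s : ℝ) (hs : s ∈ Ioc (0:ℝ) 1) :
    ∫ m, Q μ m * (Iic m).indicator (fun _ => (1:ℝ)) s ∂P = H s μ := by
  have hfun : (fun m => Q μ m * (Iic m).indicator (fun _ => (1:ℝ)) s)
      = (Ici s).indicator (Q μ) := by
    funext m
    by_cases h : s ≤ m <;> simp [indicator, h]
  rw [hfun, integral_indicator measurableSet_Ici]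
  have hres : P.restrict (Ici s) = volume.restrict (Ico s 1) := by
    rw [P, Measure.restrict_restrict measurableSet_Ici]
    congr 1
    ext x
    simp only [mem_inter_iff, mem_Ici, mem_Ioo, mem_Ico]
    exact ⟨fun h => ⟨h.1, h.2.2⟩, fun h => ⟨h.1, lt_of_lt_of_le hs.1 h.1, h.2⟩⟩
  rw [hres]
  rw [show ∫ m, Q μ m ∂(volume.restrict (Ico s 1)) = ∫ m in Ico s 1, Q μ m from rfl,
    integral_Ico_eq_integral_Ioo, H_eq μ hs]

lemma swap_eq (μ : Measure ℝ) [IsProbabilityMeasure μ] (hμ : Integrable (fun y : ℝ => y) μ) :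
    ∫ m, (∫ s, Q μ m * (Iic m).indicator (fun _ => (1:ℝ)) s ∂(nur f)) ∂P
      = ∫ s, (∫ m, Q μ m * (Iic m).indicator (fun _ => (1:ℝ)) s ∂P) ∂(nur f) :=
  integral_integral_swap (K_int f μ hμ)

lemma H_int (μ : Measure ℝ) [IsProbabilityMeasure μ] (hμ : Integrable (fun y : ℝ => y) μ) :
    Integrable (fun s => H s μ) (nur f) := by
  have h := (K_int f μ hμ).integral_prod_right
  have hae : ∀ᵐ s ∂(nur f), s ∈ Ioc (0:ℝ) 1 := ae_restrict_mem measurableSet_Ioc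
  exact h.congr (hae.mono fun s hs => inner_right μ s hs)

lemma G_int (μ : Measure ℝ) [IsProbabilityMeasure μ] (hμ : Integrable (fun y : ℝ => y) μ) :
    Integrable (fun m => Q μ m * (f m - f 0)) P := by
  have h := (K_int f μ hμ).integral_prod_left
  have hae : ∀ᵐ m ∂P, m ∈ Ioo (0:ℝ) 1 := ae_restrict_mem measurableSet_Ioo
  exact h.congr (hae.mono fun m hm => inner_left f μ m hm)

lemma decomp (α : ℝ → ℝ)
    (hfa : ∀ᵐ m ∂(volume : Measure ℝ), m ∈ Ioo (0:ℝ) 1 → α m = f m)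
    (μ : Measure ℝ) [IsProbabilityMeasure μ] (hμ : Integrable (fun y : ℝ => y) μ) :
    specRisk α μ = f 0 * (∫ y, y ∂μ) + ∫ s, H s μ ∂(nur f) := by
  have hae : ∀ᵐ m ∂P, m ∈ Ioo (0:ℝ) 1 := ae_restrict_mem measurableSet_Ioo
  have hfa' : ∀ᵐ m ∂P, α m = f m := by
    have h := ae_restrict_of_ae (μ := volume) (s := Ioo (0:ℝ) 1) hfa
    filter_upwards [hae, h] with m hm hf
    exact hf hm
  have hint1 : Integrable (fun m => Q μ m * f 0) P := (integrable_Q μ hμ).mul_const _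
  have hint2 : Integrable (fun m => Q μ m * (f m - f 0)) P := G_int f μ hμ
  have s1 : specRisk α μ = ∫ m, quantile μ m * α m ∂P := integral_Icc_eq_integral_Ioo
  have s2 : ∫ m, quantile μ m * α m ∂P = ∫ m, Q μ m * f m ∂P := by
    refine integral_congr_ae ?_
    filter_upwards [hae, hfa'] with m hm hf
    rw [hf, Q, indicator_of_mem hm]
  have s3 : ∫ m, Q μ m * f m ∂P
      = (∫ m, Q μ m * f 0 ∂P) + ∫ m, Q μ m * (f m - f 0) ∂P := by
    rw [← integral_add hint1 hint2]
    exact integral_congr_ae (Eventually.of_forall fun m => by ring)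
  have s4 : ∫ m, Q μ m * f 0 ∂P = f 0 * ∫ y, y ∂μ := by
    rw [integral_mul_const, integral_Q μ (f := fun y => y) measurable_id, mul_comm]
  have s5 : ∫ m, Q μ m * (f m - f 0) ∂P = ∫ s, H s μ ∂(nur f) := by
    have e1 : ∫ m, Q μ m * (f m - f 0) ∂P
        = ∫ m, (∫ s, Q μ m * (Iic m).indicator (fun _ => (1:ℝ)) s ∂(nur f)) ∂P := by
      refine integral_congr_ae ?_
      filter_upwards [hae] with m hm
      exact (inner_left f μ m hm).symm
    rw [e1, swap_eq f μ hμ]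
    refine integral_congr_ae ?_
    filter_upwards [ae_restrict_mem measurableSet_Ioc] with s hs
    exact inner_right μ s hs
  rw [s1, s2, s3, s4, s5]

end Alpha

lemma H_one (ν : Measure ℝ) : H 1 ν = 0 := by
  rw [H, Ioo_self, Measure.restrict_empty, integral_zero_measure]

end SRM

/-- the spectral risk measure `R_α` is concave on the set of
probability measures on ℝ with finite first moment. -/
theorem stmt3 (α : ℝ → ℝ) (hα_mono : MonotoneOn α (Icc 0 1))
    (hα_nonneg : ∀ m ∈ Icc (0:ℝ) 1, 0 ≤ α m)
    (μ₀ μ₁ : Measure ℝ) [IsProbabilityMeasure μ₀] [IsProbabilityMeasure μ₁]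
    (hμ₀ : Integrable (fun x : ℝ => x) μ₀) (hμ₁ : Integrable (fun x : ℝ => x) μ₁)
    (t : ℝ) (ht : t ∈ Icc (0:ℝ) 1) :
    (1 - t) * specRisk α μ₀ + t * specRisk α μ₁ ≤
      specRisk α (ENNReal.ofReal (1 - t) • μ₀ + ENNReal.ofReal t • μ₁) := by
  classical
  -- the clamped spectral function and its Stieltjes function
  have hmem : ∀ s : ℝ, max 0 (min s 1) ∈ Icc (0:ℝ) 1 :=
    fun s => ⟨le_max_left _ _, max_le zero_le_one (min_le_right _ _)⟩
  have hβ : Monotone (fun s : ℝ => α (max 0 (min s 1))) := fun a b hab =>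
    hα_mono (hmem a) (hmem b) (max_le_max le_rfl (min_le_min_right _ hab))
  set f := hβ.stieltjesFunction with hf
  have hfa : ∀ᵐ m ∂(volume : Measure ℝ), m ∈ Ioo (0:ℝ) 1 → α m = f m := by
    have hcnt : {x : ℝ | ¬ContinuousAt (fun s : ℝ => α (max 0 (min s 1))) x}.Countable :=
      hβ.countable_not_continuousAt
    have hnull : ∀ᵐ m ∂(volume : Measure ℝ),
        ContinuousAt (fun s : ℝ => α (max 0 (min s 1))) m := by
      rw [ae_iff]
      exact hcnt.measure_zero _
    filter_upwards [hnull] with m hm hmIoo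
    have h1 : f m = rightLim (fun s : ℝ => α (max 0 (min s 1))) m := hβ.stieltjesFunction_eq m
    have h2 : rightLim (fun s : ℝ => α (max 0 (min s 1))) m = α (max 0 (min m 1)) := by
      refine rightLim_eq_of_tendsto (hm.tendsto.mono_left nhdsWithin_le_nhds)
    have h3 : max 0 (min m 1) = m := by
      rw [min_eq_left hmIoo.2.le, max_eq_right hmIoo.1.le]
    rw [h1, h2, h3]
  set μt := ENNReal.ofReal (1 - t) • μ₀ + ENNReal.ofReal t • μ₁ with hμtdef
  haveI : IsProbabilityMeasure μt := SRM.prob_mix μ₀ μ₁ ht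
  have hit : Integrable (fun y : ℝ => y) μt := SRM.integrable_mix μ₀ μ₁ hμ₀ hμ₁
  rw [SRM.decomp f α hfa μ₀ hμ₀, SRM.decomp f α hfa μ₁ hμ₁, SRM.decomp f α hfa μt hit]
  have hmean : f 0 * ∫ y, y ∂μt
      = (1-t) * (f 0 * ∫ y, y ∂μ₀) + t * (f 0 * ∫ y, y ∂μ₁) := by
    rw [SRM.integral_mix μ₀ μ₁ ht hμ₀ hμ₁]
    ring
  have hH : ∫ s, ((1-t) * SRM.H s μ₀ + t * SRM.H s μ₁) ∂(SRM.nur f) ≤ ∫ s, SRM.H s μt ∂(SRM.nur f) := by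
    refine integral_mono_ae
      (((SRM.H_int f μ₀ hμ₀).const_mul _).add ((SRM.H_int f μ₁ hμ₁).const_mul _))
      (SRM.H_int f μt hit) ?_
    filter_upwards [ae_restrict_mem measurableSet_Ioc] with s hs
    rcases eq_or_lt_of_le hs.2 with h1 | h1
    · rw [h1, SRM.H_one, SRM.H_one, SRM.H_one]
      simp
    · exact SRM.H_concave μ₀ μ₁ ht hμ₀ hμ₁ ⟨hs.1, h1⟩
  have hexp : ∫ s, ((1-t) * SRM.H s μ₀ + t * SRM.H s μ₁) ∂(SRM.nur f)
      = (1-t) * ∫ s, SRM.H s μ₀ ∂(SRM.nur f) + t * ∫ s, SRM.H s μ₁ ∂(SRM.nur f) := by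
    rw [integral_add ((SRM.H_int f μ₀ hμ₀).const_mul _) ((SRM.H_int f μ₁ hμ₁).const_mul _),
      integral_const_mul, integral_const_mul]
  rw [hexp] at hH
  linarith
end

section
/- Let X_1, ..., X_d be Polish spaces, μ_i ∈ P(X_i), let α : [0,1] → [0,∞) be nondecreasing and bounded with μ_0 = α_# Leb_{[0,1]} on X_0 = [α(0), α(1)] ⊆ ℝ, let b : X_1 × ... × X_d → ℝ be continuous and bounded, and set s(x_0, x_1, ..., x_d) = x_0 · b(x_1, ..., x_d). For any π ∈ Γ(μ_0, μ_1, ..., μ_d) with (1,...,d)-marginal γ, one has ∫ s dπ ≤ R_α(b_# γ). Moreover, equality holds if and only if the support of the measure τ_π = ((x_0, x_1, ..., x_d) ↦ (x_0, b(x_1, ..., x_d)))_# π on ℝ² is monotone increasing (i.e., for any two points (x,y), (x',y') in the support, x < x' implies y ≤ y'). -/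
open MeasureTheory Set

/-- Lebesgue measure restricted to `[0,1]`. -/
noncomputable def lebI : Measure ℝ := volume.restrict (Icc (0:ℝ) 1)

/-- Topological support of a measure. -/
def msupport {X : Type*} [TopologicalSpace X] [MeasurableSpace X] (π : Measure X) :
    Set X :=
  {x | ∀ U ∈ nhds x, π U ≠ 0}

/-- A subset of ℝ² is monotone increasing if `x < x'` implies `y ≤ y'` for any two
of its points `(x,y)`, `(x',y')`. -/
def MonotoneIncrSet (S : Set (ℝ × ℝ)) : Prop :=
  ∀ p ∈ S, ∀ q ∈ S, p.1 < q.1 → p.2 ≤ q.2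

open scoped ENNReal

namespace Stmt5Aux

section Quantile

variable {ρ : Measure ℝ} [IsProbabilityMeasure ρ] {a A : ℝ}

/-- a.e. bounded above implies Iic A has full measure -/
lemma iic_full (hbdd : ∀ᵐ x ∂ρ, x ∈ Icc a A) : ρ (Iic A) = 1 := by
  have h0 : ρ (Ioi A) = 0 := by
    refine measure_mono_null (fun x hx => ?_) (ae_iff.1 hbdd)
    simp only [mem_setOf_eq, mem_Icc, not_and_or, not_le]
    exact Or.inr hx
  have := measure_add_measure_compl (μ := ρ) (measurableSet_Iic (a := A))
  rw [compl_Iic, h0, add_zero, measure_univ] at this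
  exact this

lemma quantile_set_nonempty (hbdd : ∀ᵐ x ∂ρ, x ∈ Icc a A) {m : ℝ} (hm : m ∈ Ioc (0:ℝ) 1) :
    A ∈ {x : ℝ | ENNReal.ofReal m ≤ ρ (Iic x)} := by
  rw [mem_setOf_eq, iic_full hbdd]
  exact ENNReal.ofReal_le_one.2 hm.2

lemma quantile_set_bddBelow (hbdd : ∀ᵐ x ∂ρ, x ∈ Icc a A) {m : ℝ} (hm : m ∈ Ioc (0:ℝ) 1) :
    {x : ℝ | ENNReal.ofReal m ≤ ρ (Iic x)} ⊆ Ici a := by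
  intro x hx
  by_contra hxa
  rw [mem_Ici, not_le] at hxa
  have h0 : ρ (Iic x) = 0 := by
    refine measure_mono_null (fun y hy => ?_) (ae_iff.1 hbdd)
    simp only [mem_setOf_eq, mem_Icc, not_and_or, not_le]
    exact Or.inl (lt_of_le_of_lt hy hxa)
  rw [mem_setOf_eq, h0, nonpos_iff_eq_zero, ENNReal.ofReal_eq_zero] at hx
  exact absurd hx (not_le.2 hm.1)

lemma quantile_mem (hbdd : ∀ᵐ x ∂ρ, x ∈ Icc a A) {m : ℝ} (hm : m ∈ Ioc (0:ℝ) 1) :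
    ENNReal.ofReal m ≤ ρ (Iic (quantile ρ m)) := by
  set S := {x : ℝ | ENNReal.ofReal m ≤ ρ (Iic x)} with hS
  have hne : S.Nonempty := ⟨A, quantile_set_nonempty hbdd hm⟩
  have hbb : BddBelow S := ⟨a, quantile_set_bddBelow hbdd hm⟩
  set q := quantile ρ m with hq
  have hqS : q = sInf S := rfl
  have hmemn : ∀ n : ℕ, q + 1/(n+1) ∈ S := by
    intro n
    have hpos : (0:ℝ) < 1/(n+1) := by positivity
    obtain ⟨x, hxS, hxlt⟩ := exists_lt_of_csInf_lt hne (by rw [← hqS]; linarith : sInf S < q + 1/(n+1))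
    exact le_trans hxS (measure_mono (Iic_subset_Iic.2 hxlt.le))
  have hiInter : ⋂ n : ℕ, Iic (q + 1/(n+1)) = Iic q := by
    ext x
    simp only [mem_iInter, mem_Iic]
    constructor
    · intro h
      by_contra hx
      push_neg at hx
      obtain ⟨n, hn⟩ := exists_nat_one_div_lt (by linarith : (0:ℝ) < x - q)
      linarith [h n]
    · intro h n
      have hpos : (0:ℝ) < 1/(n+1) := by positivity
      linarith
  have htend : Filter.Tendsto (fun n : ℕ => ρ (Iic (q + 1/(n+1)))) Filter.atTop
      (nhds (ρ (Iic q))) := by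
    rw [← hiInter]
    exact tendsto_measure_iInter_atTop (fun n => (measurableSet_Iic).nullMeasurableSet)
      (fun i j hij => Iic_subset_Iic.2 (by
        have hc : (i:ℝ) ≤ (j:ℝ) := Nat.cast_le.2 hij
        have : (1:ℝ)/(j+1) ≤ 1/(i+1) := by
          apply one_div_le_one_div_of_le (by positivity)
          linarith
        linarith)) ⟨0, measure_ne_top _ _⟩
  exact ge_of_tendsto' htend (fun n => hmemn n)

lemma quantile_le_iff (hbdd : ∀ᵐ x ∂ρ, x ∈ Icc a A) {m : ℝ} (hm : m ∈ Ioc (0:ℝ) 1) {s : ℝ} :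
    quantile ρ m ≤ s ↔ ENNReal.ofReal m ≤ ρ (Iic s) := by
  constructor
  · intro h
    exact le_trans (quantile_mem hbdd hm) (measure_mono (Iic_subset_Iic.2 h))
  · intro h
    exact csInf_le ⟨a, quantile_set_bddBelow hbdd hm⟩ h

lemma lt_quantile_iff (hbdd : ∀ᵐ x ∂ρ, x ∈ Icc a A) {m : ℝ} (hm : m ∈ Ioc (0:ℝ) 1) {s : ℝ} :
    s < quantile ρ m ↔ ρ (Iic s) < ENNReal.ofReal m := by
  rw [← not_le, ← not_le, not_iff_not]
  exact quantile_le_iff hbdd hm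

lemma quantile_mem_Icc (hbdd : ∀ᵐ x ∂ρ, x ∈ Icc a A) {m : ℝ} (hm : m ∈ Ioc (0:ℝ) 1) :
    quantile ρ m ∈ Icc a A := by
  constructor
  · exact le_csInf ⟨A, quantile_set_nonempty hbdd hm⟩
      (fun x hx => quantile_set_bddBelow hbdd hm hx)
  · exact csInf_le ⟨a, quantile_set_bddBelow hbdd hm⟩ (quantile_set_nonempty hbdd hm)

lemma quantile_monotoneOn (hbdd : ∀ᵐ x ∂ρ, x ∈ Icc a A) :
    MonotoneOn (quantile ρ) (Ioc (0:ℝ) 1) := by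
  intro m hm m' hm' hmm
  rw [quantile_le_iff hbdd hm]
  exact le_trans (ENNReal.ofReal_le_ofReal hmm) (quantile_mem hbdd hm')

/-- distribution of the quantile function under Lebesgue on (0,1] is ρ -/
lemma map_quantile (hbdd : ∀ᵐ x ∂ρ, x ∈ Icc a A) :
    (volume.restrict (Ioc (0:ℝ) 1)).map (quantile ρ) = ρ := by
  have ham : AEMeasurable (quantile ρ) (volume.restrict (Ioc (0:ℝ) 1)) :=
    aemeasurable_restrict_of_monotoneOn measurableSet_Ioc (quantile_monotoneOn hbdd)
  have hprob : IsProbabilityMeasure ((volume.restrict (Ioc (0:ℝ) 1)).map (quantile ρ)) := by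
    constructor
    rw [Measure.map_apply_of_aemeasurable ham MeasurableSet.univ]
    simp [Real.volume_Ioc]
  refine Measure.ext_of_Iic _ _ (fun s => ?_)
  rw [Measure.map_apply_of_aemeasurable ham measurableSet_Iic]
  have hset : quantile ρ ⁻¹' (Iic s) ∩ Ioc 0 1 = Ioc 0 ((ρ (Iic s)).toReal) ∩ Ioc 0 1 := by
    ext m
    simp only [mem_inter_iff, mem_preimage, mem_Iic, mem_Ioc]
    constructor
    · rintro ⟨hq, hm⟩
      have := (quantile_le_iff hbdd ⟨hm.1, hm.2⟩).1 hq
      refine ⟨⟨hm.1, ?_⟩, hm.1, hm.2⟩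
      rw [← ENNReal.ofReal_toReal (measure_ne_top ρ (Iic s))] at this
      exact (ENNReal.ofReal_le_ofReal_iff ENNReal.toReal_nonneg).1 this
    · rintro ⟨⟨hm0, hms⟩, hm⟩
      refine ⟨(quantile_le_iff hbdd ⟨hm.1, hm.2⟩).2 ?_, hm⟩
      calc ENNReal.ofReal m ≤ ENNReal.ofReal (ρ (Iic s)).toReal := ENNReal.ofReal_le_ofReal hms
        _ = ρ (Iic s) := ENNReal.ofReal_toReal (measure_ne_top ρ (Iic s))
  rw [Measure.restrict_apply' measurableSet_Ioc, hset]
  have h1 : (ρ (Iic s)).toReal ≤ 1 := by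
    have := prob_le_one (μ := ρ) (s := Iic s)
    exact ENNReal.toReal_le_of_le_ofReal zero_le_one (by simpa using this)
  have : Ioc (0:ℝ) ((ρ (Iic s)).toReal) ∩ Ioc 0 1 = Ioc 0 ((ρ (Iic s)).toReal) :=
    inter_eq_self_of_subset_left (Ioc_subset_Ioc le_rfl h1)
  rw [this, Real.volume_Ioc, sub_zero, ENNReal.ofReal_toReal (measure_ne_top ρ _)]


end Quantile

/-- basic computation: ∫⁻ t in Ioi c, 1_{t < x} dt = ofReal (x - c) -/
lemma lint_ind (x c : ℝ) (k : ℝ≥0∞) :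
    ∫⁻ t in Ioi c, (if t < x then k else 0) = ENNReal.ofReal (x - c) * k := by
  have h1 : ∀ t, (if t < x then k else 0) = (Iio x).indicator (fun _ => k) t := by
    intro t; simp [indicator_apply, mem_Iio]
  rw [lintegral_congr h1, lintegral_indicator measurableSet_Iio,
    Measure.restrict_restrict measurableSet_Iio]
  simp only [lintegral_const, Measure.restrict_apply MeasurableSet.univ, univ_inter]
  rw [Iio_inter_Ioi, Real.volume_Ioo, mul_comm]

/-- The double-integral representation of `∫ (x-a)(y-c) dτ` on the lintegral level. -/
lemma lintegral_repr {τ : Measure (ℝ × ℝ)} [IsProbabilityMeasure τ] {a c : ℝ}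
    (hb1 : ∀ᵐ p ∂τ, a ≤ p.1) (hb2 : ∀ᵐ p ∂τ, c ≤ p.2) :
    ∫⁻ p, ENNReal.ofReal ((p.1 - a) * (p.2 - c)) ∂τ
      = ∫⁻ s in Ioi a, ∫⁻ t in Ioi c, τ {p : ℝ × ℝ | s < p.1 ∧ t < p.2} := by
  have hmg : ∀ (s t : ℝ), MeasurableSet {p : ℝ × ℝ | s < p.1 ∧ t < p.2} := fun s t =>
    (measurableSet_lt measurable_const measurable_fst).inter
      (measurableSet_lt measurable_const measurable_snd)
  -- step 1 : pointwise identity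
  have step1 : ∀ᵐ p ∂τ, ENNReal.ofReal ((p.1 - a) * (p.2 - c))
      = ∫⁻ s in Ioi a, ∫⁻ t in Ioi c,
          (if s < p.1 ∧ t < p.2 then (1:ℝ≥0∞) else 0) := by
    filter_upwards [hb1, hb2] with p hp1 hp2
    have hinner : ∀ s : ℝ, (∫⁻ t in Ioi c, (if s < p.1 ∧ t < p.2 then (1:ℝ≥0∞) else 0))
        = (if s < p.1 then ENNReal.ofReal (p.2 - c) else 0) := by
      intro s
      by_cases hs : s < p.1
      · simp only [hs, true_and, if_true]
        rw [lint_ind p.2 c 1, mul_one]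
      · simp [hs]
    rw [lintegral_congr hinner, lint_ind p.1 a _, ← ENNReal.ofReal_mul (by linarith)]
  rw [lintegral_congr_ae step1]
  -- step 2 : swap τ and s
  have hmeas1 : AEMeasurable (Function.uncurry fun (p : ℝ × ℝ) (s : ℝ) =>
      ∫⁻ t in Ioi c, (if s < p.1 ∧ t < p.2 then (1:ℝ≥0∞) else 0))
      (τ.prod (volume.restrict (Ioi a))) := by
    apply Measurable.aemeasurable
    apply Measurable.lintegral_prod_right'
      (f := fun (q : ((ℝ × ℝ) × ℝ) × ℝ) => (if q.1.2 < q.1.1.1 ∧ q.2 < q.1.1.2 then (1:ℝ≥0∞) else 0))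
    apply Measurable.ite _ measurable_const measurable_const
    rw [setOf_and]
    exact ((measurableSet_lt measurable_fst.snd measurable_fst.fst.fst).inter
      (measurableSet_lt measurable_snd measurable_fst.fst.snd))
  rw [lintegral_lintegral_swap hmeas1]
  refine lintegral_congr (fun s => ?_)
  -- step 3 : swap τ and t
  have hmeas2 : AEMeasurable (Function.uncurry fun (p : ℝ × ℝ) (t : ℝ) =>
      (if s < p.1 ∧ t < p.2 then (1:ℝ≥0∞) else 0)) (τ.prod (volume.restrict (Ioi c))) := by
    apply Measurable.aemeasurable
    apply Measurable.ite _ measurable_const measurable_const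
    rw [setOf_and]
    exact (measurableSet_lt measurable_const measurable_fst.fst).inter
      (measurableSet_lt measurable_snd measurable_fst.snd)
  rw [lintegral_lintegral_swap hmeas2]
  refine lintegral_congr (fun t => ?_)
  have : ∀ p : ℝ × ℝ, (if s < p.1 ∧ t < p.2 then (1:ℝ≥0∞) else 0)
      = ({p : ℝ × ℝ | s < p.1 ∧ t < p.2}).indicator (fun _ => 1) p := by
    intro p; simp [indicator_apply]
  rw [lintegral_congr this, lintegral_indicator (hmg s t)]
  simp


variable {ρ ν : Measure ℝ} [IsProbabilityMeasure ρ] [IsProbabilityMeasure ν] {a A c D : ℝ}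

/-- 1 - max = min of complements, in ENNReal, for probability measures -/
lemma min_compl (F G : ℝ≥0∞) :
    min (1 - F) (1 - G) = 1 - max F G := by
  rcases le_total F G with h | h
  · rw [max_eq_right h, min_eq_right (tsub_le_tsub_left h 1)]
  · rw [max_eq_left h, min_eq_left (tsub_le_tsub_left h 1)]

lemma vol_quantile_gt (hbdd : ∀ᵐ x ∂ρ, x ∈ Icc a A) (hbdd' : ∀ᵐ x ∂ν, x ∈ Icc c D)
    (s t : ℝ) :
    volume {m ∈ Ioc (0:ℝ) 1 | s < quantile ρ m ∧ t < quantile ν m}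
      = min (ρ (Ioi s)) (ν (Ioi t)) := by
  set F := (ρ (Iic s)).toReal with hF
  set G := (ν (Iic t)).toReal with hG
  have hFle : ρ (Iic s) ≤ 1 := prob_le_one
  have hGle : ν (Iic t) ≤ 1 := prob_le_one
  have hF1 : F ≤ 1 := ENNReal.toReal_le_of_le_ofReal zero_le_one (by simpa using hFle)
  have hG1 : G ≤ 1 := ENNReal.toReal_le_of_le_ofReal zero_le_one (by simpa using hGle)
  have hF0 : 0 ≤ F := ENNReal.toReal_nonneg
  have hG0 : 0 ≤ G := ENNReal.toReal_nonneg
  have hset : {m ∈ Ioc (0:ℝ) 1 | s < quantile ρ m ∧ t < quantile ν m}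
      = Ioc (max F G) 1 := by
    ext m
    simp only [mem_setOf_eq, mem_Ioc, max_lt_iff]
    constructor
    · rintro ⟨hm, hq1, hq2⟩
      have h1 := (lt_quantile_iff hbdd ⟨hm.1, hm.2⟩).1 hq1
      have h2 := (lt_quantile_iff hbdd' ⟨hm.1, hm.2⟩).1 hq2
      exact ⟨⟨(ENNReal.lt_ofReal_iff_toReal_lt (measure_ne_top _ _)).1 h1,
        (ENNReal.lt_ofReal_iff_toReal_lt (measure_ne_top _ _)).1 h2⟩, hm.2⟩
    · rintro ⟨⟨h1, h2⟩, hm1⟩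
      have hm0 : 0 < m := lt_of_le_of_lt hF0 h1
      refine ⟨⟨hm0, hm1⟩, ?_, ?_⟩
      · exact (lt_quantile_iff hbdd ⟨hm0, hm1⟩).2
          ((ENNReal.lt_ofReal_iff_toReal_lt (measure_ne_top _ _)).2 h1)
      · exact (lt_quantile_iff hbdd' ⟨hm0, hm1⟩).2
          ((ENNReal.lt_ofReal_iff_toReal_lt (measure_ne_top _ _)).2 h2)
  rw [hset, Real.volume_Ioc]
  have hIoi1 : ρ (Ioi s) = 1 - ρ (Iic s) := by
    rw [← compl_Iic]; exact prob_compl_eq_one_sub measurableSet_Iic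
  have hIoi2 : ν (Ioi t) = 1 - ν (Iic t) := by
    rw [← compl_Iic]; exact prob_compl_eq_one_sub measurableSet_Iic
  rw [hIoi1, hIoi2, min_compl]
  have hmax : ENNReal.ofReal (max F G) = max (ρ (Iic s)) (ν (Iic t)) := by
    rcases le_total F G with h | h
    · rw [max_eq_right h, max_eq_right, hG, ENNReal.ofReal_toReal (measure_ne_top _ _)]
      rw [← ENNReal.ofReal_toReal (measure_ne_top ρ (Iic s)),
        ← ENNReal.ofReal_toReal (measure_ne_top ν (Iic t))]
      exact ENNReal.ofReal_le_ofReal h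
    · rw [max_eq_left h, max_eq_left, hF, ENNReal.ofReal_toReal (measure_ne_top _ _)]
      rw [← ENNReal.ofReal_toReal (measure_ne_top ρ (Iic s)),
        ← ENNReal.ofReal_toReal (measure_ne_top ν (Iic t))]
      exact ENNReal.ofReal_le_ofReal h
  rw [ENNReal.ofReal_sub _ (le_trans hF0 (le_max_left F G)), ENNReal.ofReal_one, hmax]

/-- Fréchet–Hoeffding upper bound -/
lemma FH {τ : Measure (ℝ × ℝ)} (s t : ℝ) :
    τ {p : ℝ × ℝ | s < p.1 ∧ t < p.2}
      ≤ min (τ.map Prod.fst (Ioi s)) (τ.map Prod.snd (Ioi t)) := by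
  rw [Measure.map_apply measurable_fst measurableSet_Ioi,
    Measure.map_apply measurable_snd measurableSet_Ioi]
  exact le_min (measure_mono (fun p hp => hp.1)) (measure_mono (fun p hp => hp.2))

lemma measurable_tau_rect {τ : Measure (ℝ × ℝ)} [IsProbabilityMeasure τ] :
    Measurable (fun z : ℝ × ℝ => τ {p : ℝ × ℝ | z.1 < p.1 ∧ z.2 < p.2}) := by
  have : (fun z : ℝ × ℝ => τ {p : ℝ × ℝ | z.1 < p.1 ∧ z.2 < p.2})
      = fun z : ℝ × ℝ => ∫⁻ p, (if z.1 < p.1 ∧ z.2 < p.2 then (1:ℝ≥0∞) else 0) ∂τ := by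
    funext z
    have : ∀ p : ℝ × ℝ, (if z.1 < p.1 ∧ z.2 < p.2 then (1:ℝ≥0∞) else 0)
        = ({p : ℝ × ℝ | z.1 < p.1 ∧ z.2 < p.2}).indicator (fun _ => 1) p := by
      intro p; simp [indicator_apply]
    have hset : MeasurableSet {p : ℝ × ℝ | z.1 < p.1 ∧ z.2 < p.2} := by
      rw [setOf_and]
      exact (measurableSet_lt measurable_const measurable_fst).inter
        (measurableSet_lt measurable_const measurable_snd)
    rw [lintegral_congr this, lintegral_indicator hset]
    simp
  rw [this]
  apply Measurable.lintegral_prod_right'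
    (f := fun q : (ℝ × ℝ) × (ℝ × ℝ) => (if q.1.1 < q.2.1 ∧ q.1.2 < q.2.2 then (1:ℝ≥0∞) else 0))
  apply Measurable.ite _ measurable_const measurable_const
  rw [setOf_and]
  exact (measurableSet_lt measurable_fst.fst measurable_snd.fst).inter
    (measurableSet_lt measurable_fst.snd measurable_snd.snd)

/-- a.e. equality + right approximation upgrade to everywhere (on the relevant quadrant),
together with the direct boundary cases. -/
lemma pointwise_of_iint_eq {τ : Measure (ℝ × ℝ)} [IsProbabilityMeasure τ] {a c : ℝ}
    (h1 : ∀ᵐ p ∂τ, a ≤ p.1) (h2 : ∀ᵐ p ∂τ, c ≤ p.2)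
    (hfin : (∫⁻ s in Ioi a, ∫⁻ t in Ioi c,
        min (τ.map Prod.fst (Ioi s)) (τ.map Prod.snd (Ioi t))) ≠ ⊤)
    (heq : (∫⁻ s in Ioi a, ∫⁻ t in Ioi c, τ {p : ℝ × ℝ | s < p.1 ∧ t < p.2})
      = ∫⁻ s in Ioi a, ∫⁻ t in Ioi c,
          min (τ.map Prod.fst (Ioi s)) (τ.map Prod.snd (Ioi t))) :
    ∀ s t : ℝ, τ {p : ℝ × ℝ | s < p.1 ∧ t < p.2}
      = min (τ.map Prod.fst (Ioi s)) (τ.map Prod.snd (Ioi t)) := by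
  set ρ := τ.map Prod.fst with hρ
  set ν := τ.map Prod.snd with hν
  have hρprob : IsProbabilityMeasure ρ := Measure.isProbabilityMeasure_map measurable_fst.aemeasurable
  have hνprob : IsProbabilityMeasure ν := Measure.isProbabilityMeasure_map measurable_snd.aemeasurable
  have hρIoi : ∀ s, ρ (Ioi s) = τ {p : ℝ × ℝ | s < p.1} := fun s =>
    Measure.map_apply measurable_fst measurableSet_Ioi
  have hνIoi : ∀ t, ν (Ioi t) = τ {p : ℝ × ℝ | t < p.2} := fun t =>
    Measure.map_apply measurable_snd measurableSet_Ioi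
  -- define P, f, g
  set P : Measure (ℝ × ℝ) := (volume.restrict (Ioi a)).prod (volume.restrict (Ioi c)) with hP
  set f : ℝ × ℝ → ℝ≥0∞ := fun z => τ {p : ℝ × ℝ | z.1 < p.1 ∧ z.2 < p.2} with hf
  set g : ℝ × ℝ → ℝ≥0∞ := fun z => min (ρ (Ioi z.1)) (ν (Ioi z.2)) with hg
  have hfm : Measurable f := measurable_tau_rect
  have hgm : Measurable g := by
    refine Measurable.min ?_ ?_
    · exact (Antitone.measurable (fun s s' hss' => measure_mono (Ioi_subset_Ioi hss'))).comp
        measurable_fst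
    · exact (Antitone.measurable (fun s s' hss' => measure_mono (Ioi_subset_Ioi hss'))).comp
        measurable_snd
  have hfg : ∀ z, f z ≤ g z := fun z => FH z.1 z.2
  -- convert iterated to product
  have hPf : ∫⁻ z, f z ∂P = ∫⁻ s in Ioi a, ∫⁻ t in Ioi c, f (s, t) :=
    lintegral_prod f hfm.aemeasurable
  have hPg : ∫⁻ z, g z ∂P = ∫⁻ s in Ioi a, ∫⁻ t in Ioi c, g (s, t) :=
    lintegral_prod g hgm.aemeasurable
  have hPeq : ∫⁻ z, f z ∂P = ∫⁻ z, g z ∂P := by rw [hPf, hPg]; exact heq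
  have hPffin : ∫⁻ z, f z ∂P ≠ ⊤ := by rw [hPeq, hPg]; exact hfin
  have hae : f =ᵐ[P] g :=
    ae_eq_of_ae_le_of_lintegral_le (Filter.Eventually.of_forall hfg) hPffin
      hgm.aemeasurable (le_of_eq (hPeq.symm))
  have hnull : P {z | ¬ f z = g z} = 0 := ae_iff.1 hae
  intro s t
  by_cases hsa : a ≤ s
  · by_cases htc : c ≤ t
    · -- main case : approximation from the upper right
      refine le_antisymm (FH s t) ?_
      have hsel : ∀ n : ℕ, ∃ z : ℝ × ℝ,
          f z = g z ∧ z.1 ∈ Ioo s (s + 1/(n+1)) ∧ z.2 ∈ Ioo t (t + 1/(n+1)) := by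
        intro n
        have hpos : (0:ℝ) < 1/(n+1) := by positivity
        by_contra hcon
        push_neg at hcon
        have hsub : Ioo s (s + 1/(n+1)) ×ˢ Ioo t (t + 1/(n+1)) ⊆ {z | ¬ f z = g z} := by
          rintro ⟨z1, z2⟩ hz
          intro hfz
          exact absurd hz.2 (hcon (z1, z2) hfz hz.1)
        have hP0 : P (Ioo s (s + 1/(n+1)) ×ˢ Ioo t (t + 1/(n+1))) = 0 :=
          measure_mono_null hsub hnull
        rw [hP, Measure.prod_prod, Measure.restrict_apply measurableSet_Ioo,
          Measure.restrict_apply measurableSet_Ioo] at hP0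
        have e1 : Ioo s (s + 1/(n+1)) ∩ Ioi a = Ioo s (s + 1/(n+1)) :=
          inter_eq_self_of_subset_left (fun x hx => lt_of_le_of_lt hsa hx.1)
        have e2 : Ioo t (t + 1/(n+1)) ∩ Ioi c = Ioo t (t + 1/(n+1)) :=
          inter_eq_self_of_subset_left (fun x hx => lt_of_le_of_lt htc hx.1)
        rw [e1, e2, Real.volume_Ioo, Real.volume_Ioo, add_sub_cancel_left,
          mul_eq_zero, ENNReal.ofReal_eq_zero, ENNReal.ofReal_eq_zero] at hP0
        rcases hP0 with h | h <;> linarith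
      choose zseq hzE hz1 hz2 using hsel
      have key : ∀ n : ℕ, min (ρ (Ioi (s + 1/(n+1)))) (ν (Ioi (t + 1/(n+1)))) ≤ f (s, t) := by
        intro n
        calc min (ρ (Ioi (s + 1/(n+1)))) (ν (Ioi (t + 1/(n+1))))
            ≤ min (ρ (Ioi (zseq n).1)) (ν (Ioi (zseq n).2)) :=
              min_le_min (measure_mono (Ioi_subset_Ioi (hz1 n).2.le))
                (measure_mono (Ioi_subset_Ioi (hz2 n).2.le))
          _ = f (zseq n) := (hzE n).symm
          _ ≤ f (s, t) := measure_mono (fun p hp =>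
              ⟨lt_trans (hz1 n).1 hp.1, lt_trans (hz2 n).1 hp.2⟩)
      have hun : ∀ u : ℝ, (⋃ n : ℕ, Ioi (u + 1/(n+1))) = Ioi u := by
        intro u
        ext x
        simp only [mem_iUnion, mem_Ioi]
        constructor
        · rintro ⟨n, hn⟩
          have hpos : (0:ℝ) < 1/(n+1) := by positivity
          linarith
        · intro hx
          obtain ⟨n, hn⟩ := exists_nat_one_div_lt (by linarith : (0:ℝ) < x - u)
          exact ⟨n, by linarith⟩
      have hmono : ∀ u : ℝ, Monotone (fun n : ℕ => Ioi (u + 1/(n+1))) := by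
        intro u i j hij
        apply Ioi_subset_Ioi
        have hc : (i:ℝ) ≤ (j:ℝ) := Nat.cast_le.2 hij
        have : (1:ℝ)/(j+1) ≤ 1/(i+1) := by
          apply one_div_le_one_div_of_le (by positivity)
          linarith
        linarith
      have T1 : Filter.Tendsto (fun n : ℕ => ρ (Ioi (s + 1/(n+1)))) Filter.atTop
          (nhds (ρ (Ioi s))) := by
        have := tendsto_measure_iUnion_atTop (μ := ρ) (hmono s)
        rwa [hun s] at this
      have T2 : Filter.Tendsto (fun n : ℕ => ν (Ioi (t + 1/(n+1)))) Filter.atTop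
          (nhds (ν (Ioi t))) := by
        have := tendsto_measure_iUnion_atTop (μ := ν) (hmono t)
        rwa [hun t] at this
      exact le_of_tendsto (T1.min T2) (Filter.Eventually.of_forall key)
    · -- t < c : trivial case
      push_neg at htc
      have h2' : τ {p : ℝ × ℝ | ¬ c ≤ p.2} = 0 := ae_iff.1 h2
      have hνIoi1 : ν (Ioi t) = 1 := by
        rw [hνIoi t, ← measure_univ (μ := τ)]
        apply measure_congr
        rw [ae_eq_univ]
        refine measure_mono_null (fun p (hp : ¬ t < p.2) => ?_) h2'
        exact not_le.2 (lt_of_le_of_lt (not_lt.1 hp) htc)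
      have hsets : τ {p : ℝ × ℝ | s < p.1 ∧ t < p.2} = τ {p : ℝ × ℝ | s < p.1} := by
        apply measure_congr
        rw [ae_eq_set]
        constructor
        · have he : {p : ℝ × ℝ | s < p.1 ∧ t < p.2} \ {p : ℝ × ℝ | s < p.1} = ∅ :=
            eq_empty_of_forall_notMem (fun p hp => hp.2 hp.1.1)
          rw [he, measure_empty]
        · refine measure_mono_null (fun p hp => ?_) h2'
          have hp1 : s < p.1 := hp.1
          have hp2 : ¬ t < p.2 := fun ht' => hp.2 ⟨hp1, ht'⟩
          exact not_le.2 (lt_of_le_of_lt (not_lt.1 hp2) htc)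
      rw [hsets, hνIoi1, min_eq_left prob_le_one, hρIoi s]
  · -- s < a : trivial case
    push_neg at hsa
    have h1' : τ {p : ℝ × ℝ | ¬ a ≤ p.1} = 0 := ae_iff.1 h1
    have hρIoi1 : ρ (Ioi s) = 1 := by
      rw [hρIoi s, ← measure_univ (μ := τ)]
      apply measure_congr
      rw [ae_eq_univ]
      refine measure_mono_null (fun p (hp : ¬ s < p.1) => ?_) h1'
      exact not_le.2 (lt_of_le_of_lt (not_lt.1 hp) hsa)
    have hsets : τ {p : ℝ × ℝ | s < p.1 ∧ t < p.2} = τ {p : ℝ × ℝ | t < p.2} := by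
      apply measure_congr
      rw [ae_eq_set]
      constructor
      · have he : {p : ℝ × ℝ | s < p.1 ∧ t < p.2} \ {p : ℝ × ℝ | t < p.2} = ∅ :=
          eq_empty_of_forall_notMem (fun p hp => hp.2 hp.1.2)
        rw [he, measure_empty]
      · refine measure_mono_null (fun p hp => ?_) h1'
        have hp2 : t < p.2 := hp.1
        have hp1 : ¬ s < p.1 := fun hs' => hp.2 ⟨hs', hp2⟩
        exact not_le.2 (lt_of_le_of_lt (not_lt.1 hp1) hsa)
    rw [hsets, hρIoi1, min_eq_right prob_le_one, hνIoi t]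


lemma integrable_of_ae_bdd {X : Type*} [MeasurableSpace X] {μ : Measure X} [IsFiniteMeasure μ]
    {f : X → ℝ} (hm : AEStronglyMeasurable f μ) {C : ℝ} (h : ∀ᵐ x ∂μ, |f x| ≤ C) :
    Integrable f μ :=
  ⟨hm, HasFiniteIntegral.of_bounded (C := C) (by simpa [Real.norm_eq_abs] using h)⟩

lemma expand {X : Type*} [MeasurableSpace X] {μ : Measure X} [IsProbabilityMeasure μ]
    {u v : X → ℝ} {a c : ℝ} (hu : Integrable u μ) (hv : Integrable v μ)
    (huv : Integrable (fun x => u x * v x) μ) :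
    ∫ x, (u x - a) * (v x - c) ∂μ
      = ∫ x, u x * v x ∂μ - c * ∫ x, u x ∂μ - a * ∫ x, v x ∂μ + a * c := by
  have hrw : (fun x => (u x - a) * (v x - c))
      = fun x => (u x * v x - c * u x - a * v x) + a * c := funext fun x => by ring
  have i1 : Integrable (fun x => u x * v x - c * u x) μ := by
    exact huv.sub (hu.const_mul c)
  have i2 : Integrable (fun x => u x * v x - c * u x - a * v x) μ := by
    exact i1.sub (hv.const_mul a)
  rw [hrw, integral_add i2 (integrable_const _), integral_sub i1 (hv.const_mul a),
    integral_sub huv (hu.const_mul c), integral_const_mul, integral_const_mul, integral_const]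
  simp

lemma abs_le_of_mem_Icc {x a A : ℝ} (h : x ∈ Icc a A) : |x| ≤ |a| + |A| := by
  rcases h with ⟨h1, h2⟩
  rw [abs_le]
  constructor
  · have := neg_abs_le a; have := abs_nonneg A; linarith
  · have := le_abs_self A; have := abs_nonneg a; linarith

/-- The core Hardy–Littlewood comparison on ℝ². -/
lemma core {τ : Measure (ℝ × ℝ)} [IsProbabilityMeasure τ] {a A c D : ℝ}
    (h1 : ∀ᵐ p ∂τ, p.1 ∈ Icc a A) (h2 : ∀ᵐ p ∂τ, p.2 ∈ Icc c D) :
    (∫ p, p.1 * p.2 ∂τ ≤ ∫ m in Ioc (0:ℝ) 1,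
        quantile (τ.map Prod.fst) m * quantile (τ.map Prod.snd) m) ∧
    ((∫ p, p.1 * p.2 ∂τ = ∫ m in Ioc (0:ℝ) 1,
        quantile (τ.map Prod.fst) m * quantile (τ.map Prod.snd) m) ↔
      ∀ s t : ℝ, τ {p : ℝ × ℝ | s < p.1 ∧ t < p.2}
        = min (τ.map Prod.fst (Ioi s)) (τ.map Prod.snd (Ioi t))) := by
  set ρ := τ.map Prod.fst with hρdef
  set ν := τ.map Prod.snd with hνdef
  haveI hρprob : IsProbabilityMeasure ρ := Measure.isProbabilityMeasure_map measurable_fst.aemeasurable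
  haveI hνprob : IsProbabilityMeasure ν := Measure.isProbabilityMeasure_map measurable_snd.aemeasurable
  have hρbdd : ∀ᵐ x ∂ρ, x ∈ Icc a A :=
    (ae_map_iff measurable_fst.aemeasurable measurableSet_Icc).2 h1
  have hνbdd : ∀ᵐ x ∂ν, x ∈ Icc c D :=
    (ae_map_iff measurable_snd.aemeasurable measurableSet_Icc).2 h2
  obtain ⟨p₀, hp₀1, hp₀2⟩ := (h1.and h2).exists
  have haA : a ≤ A := le_trans hp₀1.1 hp₀1.2
  have hcD : c ≤ D := le_trans hp₀2.1 hp₀2.2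
  set μ₀ : Measure ℝ := volume.restrict (Ioc (0:ℝ) 1) with hμ₀def
  haveI : IsProbabilityMeasure μ₀ := ⟨by
    rw [hμ₀def, Measure.restrict_apply MeasurableSet.univ, univ_inter, Real.volume_Ioc]
    norm_num⟩
  have hqρa : AEMeasurable (quantile ρ) μ₀ :=
    aemeasurable_restrict_of_monotoneOn measurableSet_Ioc (quantile_monotoneOn hρbdd)
  have hqνa : AEMeasurable (quantile ν) μ₀ :=
    aemeasurable_restrict_of_monotoneOn measurableSet_Ioc (quantile_monotoneOn hνbdd)
  have hqρmem : ∀ᵐ m ∂μ₀, quantile ρ m ∈ Icc a A := by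
    filter_upwards [ae_restrict_mem measurableSet_Ioc] with m hm
    exact quantile_mem_Icc hρbdd hm
  have hqνmem : ∀ᵐ m ∂μ₀, quantile ν m ∈ Icc c D := by
    filter_upwards [ae_restrict_mem measurableSet_Ioc] with m hm
    exact quantile_mem_Icc hνbdd hm
  -- the lintegral quantities
  set Lτ := ∫⁻ p, ENNReal.ofReal ((p.1 - a) * (p.2 - c)) ∂τ with hLτdef
  set LM := ∫⁻ m, ENNReal.ofReal ((quantile ρ m - a) * (quantile ν m - c)) ∂μ₀ with hLMdef
  have hreprτ : Lτ = ∫⁻ s in Ioi a, ∫⁻ t in Ioi c, τ {p : ℝ × ℝ | s < p.1 ∧ t < p.2} :=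
    lintegral_repr (h1.mono fun p hp => hp.1) (h2.mono fun p hp => hp.1)
  -- the quantile coupling
  set M : Measure (ℝ × ℝ) := μ₀.map (fun m => (quantile ρ m, quantile ν m)) with hMdef
  have hMae : AEMeasurable (fun m => (quantile ρ m, quantile ν m)) μ₀ := hqρa.prodMk hqνa
  haveI : IsProbabilityMeasure M := Measure.isProbabilityMeasure_map hMae
  have hM1 : ∀ᵐ p ∂M, a ≤ p.1 := by
    rw [hMdef, ae_map_iff hMae (measurableSet_le measurable_const measurable_fst)]
    exact hqρmem.mono fun m hm => hm.1
  have hM2 : ∀ᵐ p ∂M, c ≤ p.2 := by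
    rw [hMdef, ae_map_iff hMae (measurableSet_le measurable_const measurable_snd)]
    exact hqνmem.mono fun m hm => hm.1
  have hMrect : ∀ s t : ℝ, M {p : ℝ × ℝ | s < p.1 ∧ t < p.2} = min (ρ (Ioi s)) (ν (Ioi t)) := by
    intro s t
    have hms : MeasurableSet {p : ℝ × ℝ | s < p.1 ∧ t < p.2} := by
      rw [setOf_and]
      exact (measurableSet_lt measurable_const measurable_fst).inter
        (measurableSet_lt measurable_const measurable_snd)
    rw [hMdef, Measure.map_apply_of_aemeasurable hMae hms, hμ₀def,
      Measure.restrict_apply' measurableSet_Ioc]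
    rw [← vol_quantile_gt hρbdd hνbdd s t]
    congr 1
    ext m
    simp only [mem_inter_iff, mem_preimage, mem_setOf_eq, mem_sep_iff]
    tauto
  have hreprM : LM = ∫⁻ s in Ioi a, ∫⁻ t in Ioi c, min (ρ (Ioi s)) (ν (Ioi t)) := by
    have e0 : LM = ∫⁻ p, ENNReal.ofReal ((p.1 - a) * (p.2 - c)) ∂M := by
      rw [hMdef, lintegral_map' (by fun_prop) hMae]
    rw [e0, lintegral_repr hM1 hM2]
    refine lintegral_congr fun s => lintegral_congr fun t => hMrect s t
  -- pointwise FH bound and finiteness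
  have hle : (∫⁻ s in Ioi a, ∫⁻ t in Ioi c, τ {p : ℝ × ℝ | s < p.1 ∧ t < p.2})
      ≤ ∫⁻ s in Ioi a, ∫⁻ t in Ioi c, min (ρ (Ioi s)) (ν (Ioi t)) :=
    lintegral_mono fun s => lintegral_mono fun t => FH s t
  have hLMfin : LM ≠ ⊤ := by
    have hb : ∀ᵐ m ∂μ₀, ENNReal.ofReal ((quantile ρ m - a) * (quantile ν m - c))
        ≤ ENNReal.ofReal ((A - a) * (D - c)) := by
      filter_upwards [hqρmem, hqνmem] with m hm1 hm2
      exact ENNReal.ofReal_le_ofReal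
        (mul_le_mul (by linarith [hm1.2]) (by linarith [hm2.2]) (by linarith [hm2.1])
          (by linarith [haA]))
    have := lintegral_mono_ae hb
    rw [lintegral_const, measure_univ, mul_one] at this
    exact ne_top_of_le_ne_top ENNReal.ofReal_ne_top (hLMdef ▸ this)
  have hLτfin : Lτ ≠ ⊤ := by
    rw [hreprτ]
    refine ne_top_of_le_ne_top ?_ hle
    rwa [← hreprM]
  -- real conversions
  have hmesτ : AEStronglyMeasurable (fun p : ℝ × ℝ => (p.1 - a) * (p.2 - c)) τ :=
    (((continuous_fst.sub continuous_const).mul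
      (continuous_snd.sub continuous_const)).measurable).aestronglyMeasurable
  have hmesM : AEStronglyMeasurable (fun m => (quantile ρ m - a) * (quantile ν m - c)) μ₀ :=
    ((hqρa.sub aemeasurable_const).mul (hqνa.sub aemeasurable_const)).aestronglyMeasurable
  have hIτ : ∫ p, (p.1 - a) * (p.2 - c) ∂τ = Lτ.toReal := by
    rw [hLτdef, integral_eq_lintegral_of_nonneg_ae ?_ hmesτ]
    · filter_upwards [h1, h2] with p hp1 hp2
      exact mul_nonneg (by linarith [hp1.1]) (by linarith [hp2.1])
  have hIM : ∫ m, (quantile ρ m - a) * (quantile ν m - c) ∂μ₀ = LM.toReal := by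
    rw [hLMdef, integral_eq_lintegral_of_nonneg_ae ?_ hmesM]
    · filter_upwards [hqρmem, hqνmem] with m hm1 hm2
      exact mul_nonneg (by linarith [hm1.1]) (by linarith [hm2.1])
  -- integrability
  have habs1 : ∀ᵐ p ∂τ, |p.1| ≤ |a| + |A| := h1.mono fun p hp => abs_le_of_mem_Icc hp
  have habs2 : ∀ᵐ p ∂τ, |p.2| ≤ |c| + |D| := h2.mono fun p hp => abs_le_of_mem_Icc hp
  have intτ1 : Integrable (fun p : ℝ × ℝ => p.1) τ :=
    integrable_of_ae_bdd measurable_fst.aestronglyMeasurable habs1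
  have intτ2 : Integrable (fun p : ℝ × ℝ => p.2) τ :=
    integrable_of_ae_bdd measurable_snd.aestronglyMeasurable habs2
  have intτ12 : Integrable (fun p : ℝ × ℝ => p.1 * p.2) τ := by
    refine integrable_of_ae_bdd (measurable_fst.mul measurable_snd).aestronglyMeasurable
      (C := (|a| + |A|) * (|c| + |D|)) ?_
    filter_upwards [habs1, habs2] with p hp1 hp2
    rw [abs_mul]
    exact mul_le_mul hp1 hp2 (abs_nonneg _) (by positivity)
  have habsq1 : ∀ᵐ m ∂μ₀, |quantile ρ m| ≤ |a| + |A| := hqρmem.mono fun m hm => abs_le_of_mem_Icc hm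
  have habsq2 : ∀ᵐ m ∂μ₀, |quantile ν m| ≤ |c| + |D| := hqνmem.mono fun m hm => abs_le_of_mem_Icc hm
  have intM1 : Integrable (quantile ρ) μ₀ :=
    integrable_of_ae_bdd hqρa.aestronglyMeasurable habsq1
  have intM2 : Integrable (quantile ν) μ₀ :=
    integrable_of_ae_bdd hqνa.aestronglyMeasurable habsq2
  have intM12 : Integrable (fun m => quantile ρ m * quantile ν m) μ₀ := by
    refine integrable_of_ae_bdd (hqρa.mul hqνa).aestronglyMeasurable
      (C := (|a| + |A|) * (|c| + |D|)) ?_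
    filter_upwards [habsq1, habsq2] with m hm1 hm2
    rw [abs_mul]
    exact mul_le_mul hm1 hm2 (abs_nonneg _) (by positivity)
  -- expansions
  have hexpτ : ∫ p, (p.1 - a) * (p.2 - c) ∂τ
      = ∫ p, p.1 * p.2 ∂τ - c * ∫ p, p.1 ∂τ - a * ∫ p, p.2 ∂τ + a * c :=
    expand intτ1 intτ2 intτ12
  have hexpM : ∫ m, (quantile ρ m - a) * (quantile ν m - c) ∂μ₀
      = ∫ m, quantile ρ m * quantile ν m ∂μ₀ - c * ∫ m, quantile ρ m ∂μ₀
        - a * ∫ m, quantile ν m ∂μ₀ + a * c :=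
    expand intM1 intM2 intM12
  -- cross terms agree
  have hcross1 : ∫ p, p.1 ∂τ = ∫ m, quantile ρ m ∂μ₀ := by
    have e1 : ∫ p, p.1 ∂τ = ∫ x, x ∂ρ :=
      (integral_map measurable_fst.aemeasurable aestronglyMeasurable_id).symm
    have e2 : ∫ x, x ∂ρ = ∫ m, quantile ρ m ∂μ₀ := by
      have e3 := integral_map (φ := quantile ρ) (μ := μ₀) hqρa
        (f := id) aestronglyMeasurable_id
      rw [map_quantile hρbdd] at e3
      simpa using e3
    rw [e1, e2]
  have hcross2 : ∫ p, p.2 ∂τ = ∫ m, quantile ν m ∂μ₀ := by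
    have e1 : ∫ p, p.2 ∂τ = ∫ x, x ∂ν :=
      (integral_map measurable_snd.aemeasurable aestronglyMeasurable_id).symm
    have e2 : ∫ x, x ∂ν = ∫ m, quantile ν m ∂μ₀ := by
      have e3 := integral_map (φ := quantile ν) (μ := μ₀) hqνa
        (f := id) aestronglyMeasurable_id
      rw [map_quantile hνbdd] at e3
      simpa using e3
    rw [e1, e2]
  have hLle : Lτ ≤ LM := by rw [hreprτ, hreprM]; exact hle
  constructor
  · -- inequality
    have : Lτ.toReal ≤ LM.toReal := ENNReal.toReal_mono hLMfin hLle
    rw [← hIτ, ← hIM, hexpτ, hexpM, hcross1, hcross2] at this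
    linarith
  · constructor
    · intro h
      have hIeq : Lτ.toReal = LM.toReal := by
        rw [← hIτ, ← hIM, hexpτ, hexpM, hcross1, hcross2]
        linarith
      have hLeq : Lτ = LM := (ENNReal.toReal_eq_toReal_iff' hLτfin hLMfin).1 hIeq
      rw [hreprτ, hreprM] at hLeq
      exact pointwise_of_iint_eq (h1.mono fun p hp => hp.1) (h2.mono fun p hp => hp.1)
        (by rw [← hreprM]; exact hLMfin) hLeq
    · intro hpt
      have hLeq : Lτ = LM := by
        rw [hreprτ, hreprM]
        exact lintegral_congr fun s => lintegral_congr fun t => hpt s t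
      have : Lτ.toReal = LM.toReal := by rw [hLeq]
      rw [← hIτ, ← hIM, hexpτ, hexpM, hcross1, hcross2] at this
      linarith


section alpha

variable {α : ℝ → ℝ}

/-- monotone clamp extension -/
noncomputable def aext (α : ℝ → ℝ) : ℝ → ℝ := fun u => α (min 1 (max 0 u))

lemma aext_mono (hα : MonotoneOn α (Icc 0 1)) : Monotone (aext α) := by
  intro u v huv
  exact hα ⟨le_min zero_le_one (le_max_left 0 u), min_le_left _ _⟩
    ⟨le_min zero_le_one (le_max_left 0 v), min_le_left _ _⟩
    (min_le_min le_rfl (max_le_max le_rfl huv))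

lemma aext_eq_on (u : ℝ) (hu : u ∈ Icc (0:ℝ) 1) : aext α u = α u := by
  rw [aext, min_eq_right (by rw [max_le_iff]; exact ⟨zero_le_one, hu.2⟩),
    max_eq_right hu.1]

lemma aext_mem (hα : MonotoneOn α (Icc 0 1)) (u : ℝ) : aext α u ∈ Icc (α 0) (α 1) := by
  have hmem : min 1 (max 0 u) ∈ Icc (0:ℝ) 1 :=
    ⟨le_min zero_le_one (le_max_left 0 u), min_le_left _ _⟩
  exact ⟨hα (left_mem_Icc.2 zero_le_one) hmem hmem.1,
    hα hmem (right_mem_Icc.2 zero_le_one) hmem.2⟩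

lemma aext_measurable (hα : MonotoneOn α (Icc 0 1)) : Measurable (aext α) := (aext_mono hα).measurable

lemma lebI_prob : IsProbabilityMeasure lebI :=
  ⟨by rw [lebI, Measure.restrict_apply MeasurableSet.univ, univ_inter, Real.volume_Icc]; norm_num⟩

lemma aeq : α =ᵐ[lebI] aext α := by
  rw [lebI]
  filter_upwards [ae_restrict_mem measurableSet_Icc] with u hu
  exact (aext_eq_on u hu).symm

lemma map_eq : lebI.map α = lebI.map (aext α) := Measure.map_congr (aeq (α := α))

lemma rho_alpha_prob (hα : MonotoneOn α (Icc 0 1)) : IsProbabilityMeasure (lebI.map α) := by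
  haveI := lebI_prob
  rw [map_eq]
  exact Measure.isProbabilityMeasure_map (aext_measurable hα).aemeasurable

lemma rho_alpha_bdd (hα : MonotoneOn α (Icc 0 1)) : ∀ᵐ x ∂(lebI.map α), x ∈ Icc (α 0) (α 1) := by
  haveI := lebI_prob
  rw [map_eq]
  exact (ae_map_iff (aext_measurable hα).aemeasurable measurableSet_Icc).2
    (Filter.Eventually.of_forall (fun u => aext_mem hα u))

/-- the quantile of the pushforward measure agrees with `aext α` at continuity points -/
lemma quantile_alpha_eq (hα : MonotoneOn α (Icc 0 1)) {m : ℝ} (hm : m ∈ Ioo (0:ℝ) 1)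
    (hcont : ContinuousAt (aext α) m) :
    quantile (lebI.map α) m = aext α m := by
  haveI := lebI_prob
  haveI := rho_alpha_prob hα
  set ρ := lebI.map α with hρ
  have hbdd : ∀ᵐ x ∂ρ, x ∈ Icc (α 0) (α 1) := rho_alpha_bdd hα
  have hmeas : ∀ x : ℝ, ρ (Iic x) = volume (aext α ⁻¹' Iic x ∩ Icc 0 1) := by
    intro x
    rw [hρ, map_eq, Measure.map_apply (aext_measurable hα) measurableSet_Iic, lebI,
      Measure.restrict_apply' measurableSet_Icc]
  have hm' : m ∈ Ioc (0:ℝ) 1 := ⟨hm.1, hm.2.le⟩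
  apply le_antisymm
  · rw [quantile_le_iff hbdd hm', hmeas]
    refine le_trans ?_ (measure_mono (fun u (hu : u ∈ Icc 0 m) => ?_))
    · rw [Real.volume_Icc, sub_zero]
    · refine ⟨?_, hu.1, le_trans hu.2 hm.2.le⟩
      rw [mem_preimage, mem_Iic]
      exact aext_mono hα hu.2
  · -- show aext α u ≤ quantile for each u < m, then pass to the limit
    have hub : ∀ u : ℝ, u < m → aext α u ≤ quantile (lebI.map α) m := by
      intro u hu
      refine le_csInf ⟨α 1, quantile_set_nonempty hbdd hm'⟩ ?_
      intro x hx
      rw [mem_setOf_eq, hmeas x] at hx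
      by_contra hxu
      push_neg at hxu
      have hsub : aext α ⁻¹' Iic x ∩ Icc 0 1 ⊆ Ico 0 u := by
        rintro w ⟨hw1, hw2⟩
        refine ⟨hw2.1, ?_⟩
        by_contra hwu
        push_neg at hwu
        exact absurd (le_trans (aext_mono hα hwu) (mem_Iic.1 (mem_preimage.1 hw1)))
          (not_le.2 hxu)
      have hle := le_trans hx (measure_mono hsub)
      rw [Real.volume_Ico] at hle
      rcases ENNReal.ofReal_le_ofReal_iff'.1 hle with h | h
      · linarith
      · linarith [hm.1]
    have htend : Filter.Tendsto (aext α) (nhdsWithin m (Iio m)) (nhds (aext α m)) :=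
      (hcont.continuousWithinAt).tendsto
    exact le_of_tendsto htend (Filter.eventually_of_mem self_mem_nhdsWithin
      (fun u hu => hub u hu))

/-- a.e. version on (0,1] -/
lemma quantile_alpha_ae (hα : MonotoneOn α (Icc 0 1)) :
    ∀ᵐ m ∂(volume.restrict (Ioc (0:ℝ) 1)), quantile (lebI.map α) m = α m := by
  have hcount : Set.Countable {x | ¬ContinuousAt (aext α) x} :=
    (aext_mono hα).countable_not_continuousAt
  have hnull : volume {x | ¬ContinuousAt (aext α) x} = 0 := hcount.measure_zero _
  have hnull' : (volume.restrict (Ioc (0:ℝ) 1)) {x | ¬ContinuousAt (aext α) x} = 0 :=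
    le_antisymm (le_trans (Measure.restrict_le_self _) hnull.le) zero_le
  have h1 : (volume.restrict (Ioc (0:ℝ) 1)) {(1:ℝ)} = 0 :=
    le_antisymm (le_trans (Measure.restrict_le_self _) (measure_singleton 1).le) zero_le
  have h1'' : ∀ᵐ m ∂(volume.restrict (Ioc (0:ℝ) 1)), m ≠ 1 := by
    rw [ae_iff]
    simpa only [ne_eq, not_not, setOf_eq_eq_singleton] using h1
  have hcont'' : ∀ᵐ m ∂(volume.restrict (Ioc (0:ℝ) 1)), ContinuousAt (aext α) m :=
    (ae_iff).2 hnull'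
  filter_upwards [ae_restrict_mem measurableSet_Ioc, hcont'', h1''] with m hm hc h1'
  have hm1 : m < 1 := lt_of_le_of_ne hm.2 h1'
  rw [quantile_alpha_eq hα ⟨hm.1, hm1⟩ hc, aext_eq_on m ⟨hm.1.le, hm.2⟩]

end alpha


/-- the complement of the support is null (second countable space) -/
lemma msupport_compl_null {X : Type*} [TopologicalSpace X] [MeasurableSpace X]
    [SecondCountableTopology X]
    (τ : Measure X) : τ (msupport τ)ᶜ = 0 := by
  set 𝒰 : Set (Set X) := {U | IsOpen U ∧ τ U = 0} with h𝒰
  obtain ⟨T, hTc, hTeq⟩ := TopologicalSpace.isOpen_iUnion_countable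
    (fun U : 𝒰 => (U : Set X)) (fun U => U.2.1)
  have hsub : (msupport τ)ᶜ ⊆ ⋃ U : 𝒰, (U : Set X) := by
    intro x hx
    simp only [msupport, mem_compl_iff, mem_setOf_eq, not_forall] at hx
    obtain ⟨U, hU, hτU⟩ := hx
    push_neg at hτU
    obtain ⟨V, hVU, hVopen, hxV⟩ := mem_nhds_iff.1 hU
    have hτV : τ V = 0 := measure_mono_null hVU hτU
    exact mem_iUnion.2 ⟨⟨V, hVopen, hτV⟩, hxV⟩
  refine measure_mono_null hsub ?_
  rw [← hTeq]
  refine (measure_biUnion_null_iff hTc).2 ?_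
  intro U _
  exact U.2.2

/-- reformulation of the min condition in terms of null "defects" -/
lemma min_iff_defect {τ : Measure (ℝ × ℝ)} [IsProbabilityMeasure τ] (s t : ℝ) :
    (τ {p : ℝ × ℝ | s < p.1 ∧ t < p.2}
        = min (τ.map Prod.fst (Ioi s)) (τ.map Prod.snd (Ioi t)))
      ↔ (τ {p : ℝ × ℝ | s < p.1 ∧ p.2 ≤ t} = 0 ∨ τ {p : ℝ × ℝ | p.1 ≤ s ∧ t < p.2} = 0) := by
  set A1 := τ {p : ℝ × ℝ | s < p.1 ∧ t < p.2} with hA1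
  set A2 := τ {p : ℝ × ℝ | s < p.1 ∧ p.2 ≤ t} with hA2
  set A3 := τ {p : ℝ × ℝ | p.1 ≤ s ∧ t < p.2} with hA3
  have hm2 : MeasurableSet {p : ℝ × ℝ | s < p.1 ∧ p.2 ≤ t} := by
    rw [setOf_and]
    exact (measurableSet_lt measurable_const measurable_fst).inter
      (measurableSet_le measurable_snd measurable_const)
  have hm3 : MeasurableSet {p : ℝ × ℝ | p.1 ≤ s ∧ t < p.2} := by
    rw [setOf_and]
    exact (measurableSet_le measurable_fst measurable_const).inter
      (measurableSet_lt measurable_const measurable_snd)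
  have he1 : τ.map Prod.fst (Ioi s) = A1 + A2 := by
    rw [Measure.map_apply measurable_fst measurableSet_Ioi]
    have hu : (Prod.fst ⁻¹' Ioi s : Set (ℝ × ℝ))
        = {p : ℝ × ℝ | s < p.1 ∧ t < p.2} ∪ {p : ℝ × ℝ | s < p.1 ∧ p.2 ≤ t} := by
      ext p
      simp only [mem_preimage, mem_Ioi, mem_union, mem_setOf_eq]
      rcases le_or_gt p.2 t with h | h <;> tauto
    have hdisj : Disjoint {p : ℝ × ℝ | s < p.1 ∧ t < p.2} {p : ℝ × ℝ | s < p.1 ∧ p.2 ≤ t} := by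
      rw [Set.disjoint_left]
      rintro p ⟨_, h1⟩ ⟨_, h2⟩
      exact absurd h1 (not_lt.2 h2)
    rw [hu, measure_union hdisj hm2]
  have he2 : τ.map Prod.snd (Ioi t) = A1 + A3 := by
    rw [Measure.map_apply measurable_snd measurableSet_Ioi]
    have hu : (Prod.snd ⁻¹' Ioi t : Set (ℝ × ℝ))
        = {p : ℝ × ℝ | s < p.1 ∧ t < p.2} ∪ {p : ℝ × ℝ | p.1 ≤ s ∧ t < p.2} := by
      ext p
      simp only [mem_preimage, mem_Ioi, mem_union, mem_setOf_eq]
      rcases le_or_gt p.1 s with h | h <;> tauto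
    have hdisj : Disjoint {p : ℝ × ℝ | s < p.1 ∧ t < p.2} {p : ℝ × ℝ | p.1 ≤ s ∧ t < p.2} := by
      rw [Set.disjoint_left]
      rintro p ⟨h1, _⟩ ⟨h2, _⟩
      exact absurd h1 (not_lt.2 h2)
    rw [hu, measure_union hdisj hm3]
  rw [he1, he2]
  have hmin : min (A1 + A2) (A1 + A3) = A1 + min A2 A3 := by
    rcases le_total A2 A3 with h | h
    · rw [min_eq_left h, min_eq_left (add_le_add le_rfl h)]
    · rw [min_eq_right h, min_eq_right (add_le_add le_rfl h)]
  rw [hmin]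
  have hA1fin : A1 ≠ ⊤ := measure_ne_top τ _
  constructor
  · intro h
    have : A1 + min A2 A3 = A1 + 0 := by rw [add_zero]; exact h.symm
    have hmin0 : min A2 A3 = 0 := by
      exact (ENNReal.add_right_inj hA1fin).1 this
    rcases le_total A2 A3 with h' | h'
    · left; rw [min_eq_left h'] at hmin0; exact hmin0
    · right; rw [min_eq_right h'] at hmin0; exact hmin0
  · intro h
    have hmin0 : min A2 A3 = 0 := by
      rcases h with h | h
      · exact le_antisymm (le_trans (min_le_left _ _) h.le) zero_le
      · exact le_antisymm (le_trans (min_le_right _ _) h.le) zero_le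
    rw [hmin0, add_zero]

/-- the main support equivalence -/
lemma min_iff_support {τ : Measure (ℝ × ℝ)} [IsProbabilityMeasure τ] :
    (∀ s t : ℝ, τ {p : ℝ × ℝ | s < p.1 ∧ t < p.2}
        = min (τ.map Prod.fst (Ioi s)) (τ.map Prod.snd (Ioi t)))
      ↔ MonotoneIncrSet (msupport τ) := by
  constructor
  · intro h
    rintro p hp q hq hpq
    by_contra hcon
    push_neg at hcon
    set s := (p.1 + q.1) / 2 with hs
    set t := (q.2 + p.2) / 2 with ht
    have hps : p.1 < s := by rw [hs]; linarith
    have hsq : s < q.1 := by rw [hs]; linarith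
    have hqt : q.2 < t := by rw [ht]; linarith
    have htp : t < p.2 := by rw [ht]; linarith
    have h3pos : τ {z : ℝ × ℝ | z.1 ≤ s ∧ t < z.2} ≠ 0 := by
      have hopen : IsOpen (Iio s ×ˢ Ioi t) := isOpen_Iio.prod isOpen_Ioi
      have hmem : p ∈ Iio s ×ˢ Ioi t := ⟨hps, htp⟩
      have := hp _ (hopen.mem_nhds hmem)
      intro h0
      exact this (measure_mono_null (fun z hz => show z.1 ≤ s ∧ t < z.2 from ⟨le_of_lt hz.1, hz.2⟩) h0)
    have h2pos : τ {z : ℝ × ℝ | s < z.1 ∧ z.2 ≤ t} ≠ 0 := by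
      have hopen : IsOpen (Ioi s ×ˢ Iio t) := isOpen_Ioi.prod isOpen_Iio
      have hmem : q ∈ Ioi s ×ˢ Iio t := ⟨hsq, hqt⟩
      have := hq _ (hopen.mem_nhds hmem)
      intro h0
      exact this (measure_mono_null (fun z hz => show s < z.1 ∧ z.2 ≤ t from ⟨hz.1, le_of_lt hz.2⟩) h0)
    rcases (min_iff_defect s t).1 (h s t) with h0 | h0
    · exact h2pos h0
    · exact h3pos h0
  · intro hmono s t
    rw [min_iff_defect s t]
    by_contra hcon
    push_neg at hcon
    obtain ⟨h2, h3⟩ := hcon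
    have hcompl := msupport_compl_null τ
    have hne2 : ({z : ℝ × ℝ | s < z.1 ∧ z.2 ≤ t} ∩ msupport τ).Nonempty := by
      rw [nonempty_iff_ne_empty]
      intro hemp
      refine h2 (measure_mono_null (fun z hz => ?_) hcompl)
      rw [mem_compl_iff]
      intro hzsupp
      exact absurd (mem_inter hz hzsupp) (eq_empty_iff_forall_notMem.1 hemp z)
    have hne3 : ({z : ℝ × ℝ | z.1 ≤ s ∧ t < z.2} ∩ msupport τ).Nonempty := by
      rw [nonempty_iff_ne_empty]
      intro hemp
      refine h3 (measure_mono_null (fun z hz => ?_) hcompl)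
      rw [mem_compl_iff]
      intro hzsupp
      exact absurd (mem_inter hz hzsupp) (eq_empty_iff_forall_notMem.1 hemp z)
    obtain ⟨u, hu2, husupp⟩ := hne2
    obtain ⟨v, hv3, hvsupp⟩ := hne3
    have hle := hmono v hvsupp u husupp (lt_of_le_of_lt hv3.1 hu2.1)
    exact absurd hle (not_le.2 (lt_of_le_of_lt hu2.2 hv3.2))


end Stmt5Aux

/-- for any `π ∈ Γ(μ_0, μ_1, ..., μ_d)` (with `μ_0 = α_# Leb`) and its
`(1,...,d)`-marginal `γ`, one has `∫ x_0 b(x_1,...,x_d) dπ ≤ R_α(b_# γ)`, with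
equality iff `τ_π = ((x_0,x) ↦ (x_0, b x))_# π` has monotone increasing support. -/
theorem stmt5 (d : ℕ) (X : Fin d → Type*) [∀ i, MeasurableSpace (X i)]
    [∀ i, TopologicalSpace (X i)] [∀ i, PolishSpace (X i)] [∀ i, BorelSpace (X i)]
    (μ : ∀ i, Measure (X i)) (hμ : ∀ i, IsProbabilityMeasure (μ i))
    (α : ℝ → ℝ) (hα_mono : MonotoneOn α (Icc 0 1))
    (hα_nonneg : ∀ m ∈ Icc (0:ℝ) 1, 0 ≤ α m)
    (b : (∀ i, X i) → ℝ) (hb_cont : Continuous b) (hb_bdd : ∃ C, ∀ z, |b z| ≤ C)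
    (π : Measure (ℝ × ∀ i, X i)) (hπ_prob : IsProbabilityMeasure π)
    (hπ0 : π.map Prod.fst = lebI.map α)
    (hπi : ∀ i, π.map (fun p => p.2 i) = μ i)
    (γ : Measure (∀ i, X i)) (hγ : γ = π.map Prod.snd) :
    (∫ p, p.1 * b p.2 ∂π ≤ specRisk α (γ.map b)) ∧
    ((∫ p, p.1 * b p.2 ∂π = specRisk α (γ.map b)) ↔
      MonotoneIncrSet (msupport (π.map (fun p => (p.1, b p.2))))) := by
  classical
  obtain ⟨C, hC⟩ := hb_bdd
  set C' := |C| with hC'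
  have hbC : ∀ z, |b z| ≤ C' := fun z => le_trans (hC z) (le_abs_self C)
  set F : (ℝ × ∀ i, X i) → ℝ × ℝ := fun p => (p.1, b p.2) with hF
  have hFm : Measurable F := measurable_fst.prodMk (hb_cont.measurable.comp measurable_snd)
  set τ := π.map F with hτ
  haveI : IsProbabilityMeasure τ := Measure.isProbabilityMeasure_map hFm.aemeasurable
  have hτfst : τ.map Prod.fst = lebI.map α := by
    rw [hτ, Measure.map_map measurable_fst hFm]
    exact hπ0
  have hτsnd : τ.map Prod.snd = γ.map b := by
    rw [hτ, Measure.map_map measurable_snd hFm, hγ,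
      Measure.map_map hb_cont.measurable measurable_snd]
    rfl
  have hαbdd : ∀ᵐ x ∂(lebI.map α), x ∈ Icc (α 0) (α 1) := Stmt5Aux.rho_alpha_bdd hα_mono
  have hτ1 : ∀ᵐ p ∂τ, p.1 ∈ Icc (α 0) (α 1) :=
    (MeasureTheory.ae_map_iff measurable_fst.aemeasurable measurableSet_Icc).1
      (by rw [hτfst]; exact hαbdd)
  have hτ2 : ∀ᵐ p ∂τ, p.2 ∈ Icc (-C') C' := by
    rw [hτ]
    have hmeas : MeasurableSet {y : ℝ × ℝ | y.2 ∈ Icc (-C') C'} :=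
      measurable_snd measurableSet_Icc
    exact (MeasureTheory.ae_map_iff (p := fun y : ℝ × ℝ => y.2 ∈ Icc (-C') C')
      hFm.aemeasurable hmeas).2
      (Filter.Eventually.of_forall (fun q => abs_le.1 (hbC q.2)))
  have hcore := Stmt5Aux.core hτ1 hτ2
  have hint : ∫ p, p.1 * p.2 ∂τ = ∫ p, p.1 * b p.2 ∂π := by
    rw [hτ]
    exact integral_map hFm.aemeasurable
      (measurable_fst.mul measurable_snd).aestronglyMeasurable
  have hq := Stmt5Aux.quantile_alpha_ae hα_mono
  have hRHS : ∫ m in Ioc (0:ℝ) 1,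
      quantile (τ.map Prod.fst) m * quantile (τ.map Prod.snd) m = specRisk α (γ.map b) := by
    rw [specRisk, ← Measure.restrict_congr_set Ioc_ae_eq_Icc]
    refine integral_congr_ae ?_
    filter_upwards [hq] with m hm
    rw [hτfst, hτsnd, hm, mul_comm]
  constructor
  · rw [← hint, ← hRHS]
    exact hcore.1
  · rw [← hint, ← hRHS]
    exact hcore.2.trans Stmt5Aux.min_iff_support
end

section
/- Let X_1, ..., X_d be Polish spaces, μ_i ∈ P(X_i), let α : [0,1] → [0,∞) be nondecreasing and bounded with μ_0 = α_# Leb_{[0,1]}, and let b : X_1 × ... × X_d → ℝ be Borel measurable and bounded. Then for every γ ∈ Γ(μ_1, ..., μ_d) there exists π ∈ Γ(μ_0, μ_1, ..., μ_d) whose (1,...,d)-marginal is γ and such that the pushforward ((x_0, x_1, ..., x_d) ↦ (x_0, b(x_1, ..., x_d)))_# π has monotone increasing support. -/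
open MeasureTheory Set
open ProbabilityTheory

instance : IsProbabilityMeasure lebI := by
  constructor
  rw [lebI, Measure.restrict_apply MeasurableSet.univ, Set.univ_inter, Real.volume_Icc]
  norm_num

lemma quantile_exists (ν : Measure ℝ) [IsProbabilityMeasure ν] (C : ℝ) (hC : 0 ≤ C)
    (h1 : ν (Iic C) = 1) (h0 : ∀ x < -C, ν (Iic x) = 0) :
    ∃ G : ℝ → ℝ, Monotone G ∧ lebI.map G = ν := by
  set F : ℝ → ℝ := fun x => cdf ν x with hF
  have hFC : F C = 1 := by
    rw [hF]; simp only [cdf_eq_real, measureReal_def, h1, ENNReal.toReal_one]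
  have hF0 : ∀ x < -C, F x = 0 := by
    intro x hx
    rw [hF]; simp only [cdf_eq_real, measureReal_def, h0 x hx, ENNReal.toReal_zero]
  set S : ℝ → Set ℝ := fun t => {x ∈ Icc (-(C+1)) (C+1) | min t 1 ≤ F x} with hS
  have hCS : ∀ t, C ∈ S t := by
    intro t
    refine ⟨⟨by linarith, by linarith⟩, ?_⟩
    rw [hFC]; exact min_le_right _ _
  have hSne : ∀ t, (S t).Nonempty := fun t => ⟨C, hCS t⟩
  have hSbdd : ∀ t, BddBelow (S t) := fun t => ⟨-(C+1), fun x hx => hx.1.1⟩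
  set G : ℝ → ℝ := fun t => sInf (S t) with hG
  have hGmono : Monotone G := by
    intro t t' htt'
    exact csInf_le_csInf (hSbdd t) (hSne t')
      (fun x hx => ⟨hx.1, le_trans (by exact min_le_min htt' le_rfl) hx.2⟩)
  have hGmeas : Measurable G := hGmono.measurable
  -- key equivalence
  have hkey : ∀ t ∈ Ioo (0:ℝ) 1, ∀ x : ℝ, G t ≤ x ↔ t ≤ F x := by
    intro t ht x
    have hmin : min t 1 = t := min_eq_left ht.2.le
    constructor
    · intro hGx
      have h1 : t ≤ F (G t) := by
        by_contra hlt
        push_neg at hlt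
        have hrc : ContinuousWithinAt F (Ici (G t)) (G t) :=
          (cdf ν).right_continuous (G t)
        have hmem : {y | F y < t} ∈ nhdsWithin (G t) (Ici (G t)) :=
          hrc (Iio_mem_nhds hlt)
        rw [mem_nhdsGE_iff_exists_Ico_subset] at hmem
        obtain ⟨u, hu, hsub⟩ := hmem
        obtain ⟨y, hyS, hyu⟩ := (csInf_lt_iff (hSbdd t) (hSne t)).mp hu
        have hGy : G t ≤ y := csInf_le (hSbdd t) hyS
        have := hsub ⟨hGy, hyu⟩
        have h2 : t ≤ F y := by rw [← hmin]; exact hyS.2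
        simp only [mem_setOf_eq] at this
        linarith
      exact le_trans h1 ((cdf ν).mono hGx)
    · intro htFx
      rcases le_or_gt C x with hxC | hxC
      · exact le_trans (csInf_le (hSbdd t) (hCS t)) hxC
      · have hxlb : -C ≤ x := by
          by_contra hxl
          push_neg at hxl
          have := hF0 x hxl
          linarith [ht.1]
        exact csInf_le (hSbdd t) ⟨⟨by linarith, by linarith⟩, by rw [hmin]; exact htFx⟩
  refine ⟨G, hGmono, ?_⟩
  have : IsProbabilityMeasure (lebI.map G) := Measure.isProbabilityMeasure_map hGmeas.aemeasurable
  refine Measure.ext_of_Iic (lebI.map G) ν ?_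
  intro x
  rw [Measure.map_apply hGmeas measurableSet_Iic]
  have hIoonull : lebI ((Ioo (0:ℝ) 1)ᶜ) = 0 := by
    rw [lebI, Measure.restrict_apply (measurableSet_Ioo.compl)]
    have : (Ioo (0:ℝ) 1)ᶜ ∩ Icc 0 1 = {0, 1} := by
      ext y
      simp only [mem_inter_iff, mem_compl_iff, mem_Ioo, mem_Icc, mem_insert_iff,
        mem_singleton_iff]
      constructor
      · rintro ⟨hy, hy0, hy1⟩
        rcases lt_or_eq_of_le hy0 with h | h
        · right; by_contra h1; exact hy ⟨h, lt_of_le_of_ne hy1 h1⟩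
        · left; exact h.symm
      · rintro (rfl | rfl) <;> norm_num
    rw [this]
    exact Set.Finite.measure_zero (by exact (Set.finite_singleton _).insert _) _
  have hmeaseq : ∀ (A B : Set ℝ), MeasurableSet A → MeasurableSet B →
      A ∩ Ioo 0 1 = B ∩ Ioo 0 1 → lebI A = lebI B := by
    intro A B hA hB hAB
    have h1 : lebI A = lebI (A ∩ Ioo 0 1) := by
      refine (measure_inter_conull' ?_).symm
      exact measure_mono_null (fun y hy => hy.2) hIoonull
    have h2 : lebI B = lebI (B ∩ Ioo 0 1) := by
      refine (measure_inter_conull' ?_).symm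
      exact measure_mono_null (fun y hy => hy.2) hIoonull
    rw [h1, h2, hAB]
  have heq : lebI (G ⁻¹' Iic x) = lebI (Iic (F x)) := by
    refine hmeaseq _ _ (hGmeas measurableSet_Iic) measurableSet_Iic ?_
    ext t
    simp only [mem_inter_iff, mem_preimage, mem_Iic, mem_Ioo, and_congr_left_iff]
    intro ht
    exact hkey t ⟨ht.1, ht.2⟩ x
  rw [heq]
  have hFx0 : 0 ≤ F x := cdf_nonneg ν x
  have hFx1 : F x ≤ 1 := cdf_le_one ν x
  rw [lebI, Measure.restrict_apply measurableSet_Iic]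
  have : Iic (F x) ∩ Icc 0 1 = Icc 0 (F x) := by
    ext y
    simp only [mem_inter_iff, mem_Iic, mem_Icc]
    constructor
    · rintro ⟨h1, h2, h3⟩; exact ⟨h2, h1⟩
    · rintro ⟨h1, h2⟩; exact ⟨h2, h1, le_trans h2 hFx1⟩
  rw [this, Real.volume_Icc]
  rw [sub_zero]
  exact ofReal_cdf ν x


lemma msupport_map_subset {β X : Type*} [MeasurableSpace β] [TopologicalSpace X]
    [MeasurableSpace X] [OpensMeasurableSpace X] (μ : Measure β) (f : β → X)
    (hf : Measurable f) : msupport (μ.map f) ⊆ closure (range f) := by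
  intro z hz
  by_contra hzc
  have hU : (closure (range f))ᶜ ∈ nhds z :=
    (isClosed_closure.isOpen_compl).mem_nhds hzc
  refine hz _ hU ?_
  rw [Measure.map_apply hf (isClosed_closure.isOpen_compl).measurableSet]
  have : f ⁻¹' (closure (range f))ᶜ = ∅ := by
    ext y
    simp only [mem_preimage, mem_compl_iff, mem_empty_iff_false, iff_false, not_not]
    exact subset_closure (mem_range_self y)
  rw [this, measure_empty]

lemma monotoneIncrSet_mono {S T : Set (ℝ × ℝ)} (h : S ⊆ T) (hT : MonotoneIncrSet T) :
    MonotoneIncrSet S := fun p hp q hq hpq => hT p (h hp) q (h hq) hpq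

lemma monotoneIncrSet_closure_range {a g : ℝ → ℝ} (ha : Monotone a) (hg : Monotone g) :
    MonotoneIncrSet (closure (range (fun t => (a t, g t)))) := by
  intro p hp q hq hpq
  refine le_of_forall_pos_le_add ?_
  intro ε hε
  set δ := min (ε / 2) ((q.1 - p.1) / 2) with hδ
  have hδpos : 0 < δ := lt_min (by linarith) (by linarith)
  obtain ⟨p', hp', hpd⟩ := Metric.mem_closure_iff.mp hp δ hδpos
  obtain ⟨q', hq', hqd⟩ := Metric.mem_closure_iff.mp hq δ hδpos
  obtain ⟨s, rfl⟩ := hp'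
  obtain ⟨s', rfl⟩ := hq'
  have h1 : dist p.1 (a s) < δ := lt_of_le_of_lt (by rw [Prod.dist_eq]; exact le_max_left _ _ : dist p.1 (a s) ≤ dist p (a s, g s)) hpd
  have h2 : dist p.2 (g s) < δ := lt_of_le_of_lt (by rw [Prod.dist_eq]; exact le_max_right _ _ : dist p.2 (g s) ≤ dist p (a s, g s)) hpd
  have h3 : dist q.1 (a s') < δ := lt_of_le_of_lt (by rw [Prod.dist_eq]; exact le_max_left _ _ : dist q.1 (a s') ≤ dist q (a s', g s')) hqd
  have h4 : dist q.2 (g s') < δ := lt_of_le_of_lt (by rw [Prod.dist_eq]; exact le_max_right _ _ : dist q.2 (g s') ≤ dist q (a s', g s')) hqd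
  rw [Real.dist_eq, abs_lt] at h1 h2 h3 h4
  have hδ2 : δ ≤ (q.1 - p.1) / 2 := min_le_right _ _
  have hass' : a s < a s' := by linarith
  have hss' : s < s' := by
    by_contra hc
    push_neg at hc
    exact absurd (ha hc) (not_le.mpr hass')
  have hgs : g s ≤ g s' := hg hss'.le
  have hδε : δ ≤ ε / 2 := min_le_left _ _
  linarith


lemma map_compProd_prod_fst {α β γ : Type*} [MeasurableSpace α] [MeasurableSpace β]
    [MeasurableSpace γ] (μ : Measure α) [SFinite μ] (κ1 : Kernel α β) (κ2 : Kernel α γ)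
    [IsMarkovKernel κ1] [IsMarkovKernel κ2] :
    (μ ⊗ₘ (κ1 ×ₖ κ2)).map (fun p => (p.1, p.2.1)) = μ ⊗ₘ κ1 := by
  have hm : Measurable (fun p : α × β × γ => (p.1, p.2.1)) :=
    measurable_fst.prodMk (measurable_fst.comp measurable_snd)
  ext s hs
  rw [Measure.map_apply hm hs, Measure.compProd_apply (hm hs), Measure.compProd_apply hs]
  congr 1
  ext a
  rw [Kernel.prod_apply]
  have : (Prod.mk a ⁻¹' ((fun p : α × β × γ => (p.1, p.2.1)) ⁻¹' s))
      = (Prod.mk a ⁻¹' s) ×ˢ (univ : Set γ) := by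
    ext y; simp [Set.mem_prod]
  rw [this, Measure.prod_prod, measure_univ, mul_one]

lemma map_compProd_prod_snd {α β γ : Type*} [MeasurableSpace α] [MeasurableSpace β]
    [MeasurableSpace γ] (μ : Measure α) [SFinite μ] (κ1 : Kernel α β) (κ2 : Kernel α γ)
    [IsMarkovKernel κ1] [IsMarkovKernel κ2] :
    (μ ⊗ₘ (κ1 ×ₖ κ2)).map (fun p => (p.1, p.2.2)) = μ ⊗ₘ κ2 := by
  have hm : Measurable (fun p : α × β × γ => (p.1, p.2.2)) :=
    measurable_fst.prodMk (measurable_snd.comp measurable_snd)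
  ext s hs
  rw [Measure.map_apply hm hs, Measure.compProd_apply (hm hs), Measure.compProd_apply hs]
  congr 1
  ext a
  rw [Kernel.prod_apply]
  have : (Prod.mk a ⁻¹' ((fun p : α × β × γ => (p.1, p.2.2)) ⁻¹' s))
      = (univ : Set β) ×ˢ (Prod.mk a ⁻¹' s) := by
    ext y; simp [Set.mem_prod]
  rw [this, Measure.prod_prod, measure_univ, one_mul]


/-- gluing lemma: for any `γ ∈ Γ(μ_1,...,μ_d)` there is a
`π ∈ Γ(μ_0, μ_1,...,μ_d)` (with `μ_0 = α_# Leb_{[0,1]}`) whose `(1,...,d)`-marginal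
is `γ` and such that `((x_0, x) ↦ (x_0, b x))_# π` has monotone increasing support. -/
theorem stmt6 (d : ℕ) (X : Fin d → Type*) [∀ i, MeasurableSpace (X i)]
    [∀ i, TopologicalSpace (X i)] [∀ i, PolishSpace (X i)] [∀ i, BorelSpace (X i)]
    (μ : ∀ i, Measure (X i)) (hμ : ∀ i, IsProbabilityMeasure (μ i))
    (α : ℝ → ℝ) (hα_mono : MonotoneOn α (Icc 0 1))
    (hα_nonneg : ∀ m ∈ Icc (0:ℝ) 1, 0 ≤ α m)
    (b : (∀ i, X i) → ℝ) (hb_meas : Measurable b) (hb_bdd : ∃ C, ∀ z, |b z| ≤ C)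
    (γ : Measure (∀ i, X i)) (hγ_prob : IsProbabilityMeasure γ)
    (hγi : ∀ i, γ.map (fun z => z i) = μ i) :
    ∃ π : Measure (ℝ × ∀ i, X i), IsProbabilityMeasure π ∧
      π.map Prod.fst = lebI.map α ∧
      π.map Prod.snd = γ ∧
      MonotoneIncrSet (msupport (π.map (fun p => (p.1, b p.2)))) := by
  classical
  obtain ⟨C0, hC0⟩ := hb_bdd
  set C := max C0 0 with hCdef
  have hC : 0 ≤ C := le_max_right _ _
  have hbC : ∀ z, |b z| ≤ C := fun z => le_trans (hC0 z) (le_max_left _ _)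
  haveI hne : Nonempty (∀ i, X i) := by
    by_contra h
    rw [not_nonempty_iff] at h
    have h1 : γ Set.univ = 1 := hγ_prob.measure_univ
    rw [Set.univ_eq_empty_iff.mpr h, measure_empty] at h1
    exact zero_ne_one h1
  set ν : Measure ℝ := γ.map b with hν
  haveI : IsProbabilityMeasure ν := Measure.isProbabilityMeasure_map hb_meas.aemeasurable
  have hν1 : ν (Iic C) = 1 := by
    rw [hν, Measure.map_apply hb_meas measurableSet_Iic]
    have : b ⁻¹' Iic C = Set.univ := by
      ext z
      simp only [mem_preimage, mem_Iic, mem_univ, iff_true]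
      exact le_trans (le_abs_self _) (hbC z)
    rw [this]
    exact hγ_prob.measure_univ
  have hν0 : ∀ x < -C, ν (Iic x) = 0 := by
    intro x hx
    rw [hν, Measure.map_apply hb_meas measurableSet_Iic]
    have : b ⁻¹' Iic x = ∅ := by
      ext z
      simp only [mem_preimage, mem_Iic, mem_empty_iff_false, iff_false, not_le]
      have := (abs_le.mp (hbC z)).1
      linarith
    rw [this, measure_empty]
  obtain ⟨G, hGmono, hGmap⟩ := quantile_exists ν C hC hν1 hν0
  have hGmeas : Measurable G := hGmono.measurable
  set α' : ℝ → ℝ := fun t => α (max 0 (min t 1)) with hα'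
  have hclamp : ∀ t, max 0 (min t 1) ∈ Icc (0:ℝ) 1 :=
    fun t => ⟨le_max_left _ _, max_le (by norm_num) (min_le_right _ _)⟩
  have hα'mono : Monotone α' := by
    intro t t' h
    exact hα_mono (hclamp t) (hclamp t') (max_le_max le_rfl (min_le_min h le_rfl))
  have hα'meas : Measurable α' := hα'mono.measurable
  have hανeq : lebI.map α = lebI.map α' := by
    refine Measure.map_congr ?_
    have hsub : {t | ¬ α t = α' t} ⊆ (Icc (0:ℝ) 1)ᶜ := by
      intro t ht htI
      apply ht
      have h1 : min t 1 = t := min_eq_left htI.2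
      have h2 : max 0 t = t := max_eq_right htI.1
      rw [hα']
      simp only [h1, h2]
    refine measure_mono_null hsub ?_
    rw [lebI, Measure.restrict_apply measurableSet_Icc.compl, compl_inter_self, measure_empty]
  set f0 : ℝ → ℝ × ℝ := fun t => (G t, α' t) with hf0
  have hf0meas : Measurable f0 := hGmeas.prodMk hα'meas
  set σ : Measure (ℝ × ℝ) := lebI.map f0 with hσ
  haveI : IsProbabilityMeasure σ := Measure.isProbabilityMeasure_map hf0meas.aemeasurable
  have hσfst : σ.fst = ν := by
    rw [hσ, Measure.fst, Measure.map_map measurable_fst hf0meas]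
    have : Prod.fst ∘ f0 = G := rfl
    rw [this, hGmap]
  have hρmeas : Measurable (fun x : ∀ i, X i => (b x, x)) := hb_meas.prodMk measurable_id
  set ρ : Measure (ℝ × (∀ i, X i)) := γ.map (fun x => (b x, x)) with hρ
  haveI : IsProbabilityMeasure ρ := Measure.isProbabilityMeasure_map hρmeas.aemeasurable
  have hρfst : ρ.fst = ν := by
    rw [hρ, Measure.fst, Measure.map_map measurable_fst hρmeas]
    have : (Prod.fst ∘ fun x : ∀ i, X i => (b x, x)) = b := rfl
    rw [this, hν]
  set κ1 := σ.condKernel with hκ1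
  set κ2 := ρ.condKernel with hκ2
  set M : Measure (ℝ × (ℝ × (∀ i, X i))) := ν ⊗ₘ (κ1 ×ₖ κ2) with hM
  haveI : IsProbabilityMeasure M := by rw [hM]; infer_instance
  have hMa : M.map (fun p => (p.1, p.2.1)) = σ := by
    rw [hM, map_compProd_prod_fst, hκ1, ← hσfst]
    exact σ.disintegrate σ.condKernel
  have hMb : M.map (fun p => (p.1, p.2.2)) = ρ := by
    rw [hM, map_compProd_prod_snd, hκ2, ← hρfst]
    exact ρ.disintegrate ρ.condKernel
  set π : Measure (ℝ × ∀ i, X i) := M.map (fun p => p.2) with hπ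
  have hm1 : Measurable (fun p : ℝ × (ℝ × (∀ i, X i)) => (p.1, p.2.1)) :=
    measurable_fst.prodMk (measurable_fst.comp measurable_snd)
  have hm2 : Measurable (fun p : ℝ × (ℝ × (∀ i, X i)) => (p.1, p.2.2)) :=
    measurable_fst.prodMk (measurable_snd.comp measurable_snd)
  refine ⟨π, Measure.isProbabilityMeasure_map measurable_snd.aemeasurable, ?_, ?_, ?_⟩
  · rw [hπ, Measure.map_map measurable_fst measurable_snd]
    rw [show ((Prod.fst : ℝ × (∀ i, X i) → ℝ) ∘ fun p : ℝ × (ℝ × (∀ i, X i)) => p.2)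
      = Prod.snd ∘ (fun p : ℝ × (ℝ × (∀ i, X i)) => (p.1, p.2.1)) from rfl]
    rw [← Measure.map_map measurable_snd hm1, hMa, hσ,
      Measure.map_map measurable_snd hf0meas]
    have : Prod.snd ∘ f0 = α' := rfl
    rw [this, hανeq]
  · rw [hπ, Measure.map_map measurable_snd measurable_snd]
    rw [show ((Prod.snd : ℝ × (∀ i, X i) → (∀ i, X i)) ∘ fun p : ℝ × (ℝ × (∀ i, X i)) => p.2)
      = Prod.snd ∘ (fun p : ℝ × (ℝ × (∀ i, X i)) => (p.1, p.2.2)) from rfl]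
    rw [← Measure.map_map measurable_snd hm2, hMb, hρ,
      Measure.map_map measurable_snd hρmeas]
    have : (Prod.snd ∘ fun x : ∀ i, X i => (b x, x)) = id := rfl
    rw [this, Measure.map_id]
  · have hmeas2 : MeasurableSet {p : ℝ × (∀ i, X i) | b p.2 ≠ p.1} := by
      have h := measurableSet_eq_fun (hb_meas.comp measurable_snd)
        (measurable_fst : Measurable (Prod.fst : ℝ × (∀ i, X i) → ℝ))
      exact h.compl
    have hsetmeas : MeasurableSet {p : ℝ × (ℝ × (∀ i, X i)) | b p.2.2 ≠ p.1} := by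
      have h := measurableSet_eq_fun (hb_meas.comp (measurable_snd.comp measurable_snd))
        (measurable_fst : Measurable (Prod.fst : ℝ × (ℝ × (∀ i, X i)) → ℝ))
      exact h.compl
    have hnull : M {p : ℝ × (ℝ × (∀ i, X i)) | b p.2.2 ≠ p.1} = 0 := by
      rw [hM, Measure.compProd_apply hsetmeas]
      have hsec : ∀ s : ℝ, (κ1 ×ₖ κ2) s
          (Prod.mk s ⁻¹' {p : ℝ × (ℝ × (∀ i, X i)) | b p.2.2 ≠ p.1})
          = κ2 s {x | b x ≠ s} := by
        intro s
        rw [Kernel.prod_apply]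
        have : Prod.mk s ⁻¹' {p : ℝ × (ℝ × (∀ i, X i)) | b p.2.2 ≠ p.1}
            = (univ : Set ℝ) ×ˢ {x : ∀ i, X i | b x ≠ s} := by
          ext y
          simp [Set.mem_prod]
        rw [this, Measure.prod_prod, measure_univ, one_mul]
      simp_rw [hsec]
      have h2 : ∫⁻ s, κ2 s {x | b x ≠ s} ∂ν = ρ {p : ℝ × (∀ i, X i) | b p.2 ≠ p.1} := by
        rw [← hρfst, hκ2]
        exact MeasureTheory.Measure.lintegral_condKernel_mem hmeas2
      rw [h2, hρ, Measure.map_apply hρmeas hmeas2]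
      have : (fun x : ∀ i, X i => (b x, x)) ⁻¹' {p : ℝ × (∀ i, X i) | b p.2 ≠ p.1} = ∅ := by
        ext x
        simp
      rw [this, measure_empty]
    have hae : (fun p : ℝ × (ℝ × (∀ i, X i)) => (p.2.1, b p.2.2))
        =ᵐ[M] (fun p => (p.2.1, p.1)) := by
      have hae0 : ∀ᵐ p ∂M, b p.2.2 = p.1 := by
        rw [MeasureTheory.ae_iff]
        exact hnull
      filter_upwards [hae0] with p hp
      rw [hp]
    have hmm : Measurable (fun p : ℝ × (∀ i, X i) => (p.1, b p.2)) :=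
      measurable_fst.prodMk (hb_meas.comp measurable_snd)
    have hπb : π.map (fun p => (p.1, b p.2)) = lebI.map (fun t => (α' t, G t)) := by
      rw [hπ, Measure.map_map hmm measurable_snd]
      rw [show ((fun p : ℝ × (∀ i, X i) => (p.1, b p.2)) ∘
        (fun p : ℝ × (ℝ × (∀ i, X i)) => p.2))
        = fun p : ℝ × (ℝ × (∀ i, X i)) => (p.2.1, b p.2.2) from rfl]
      rw [Measure.map_congr hae]
      rw [show (fun p : ℝ × (ℝ × (∀ i, X i)) => (p.2.1, p.1))
        = Prod.swap ∘ (fun p : ℝ × (ℝ × (∀ i, X i)) => (p.1, p.2.1)) from rfl]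
      rw [← Measure.map_map measurable_swap hm1, hMa, hσ,
        Measure.map_map measurable_swap hf0meas]
      rfl
    rw [hπb]
    exact monotoneIncrSet_mono
      (msupport_map_subset lebI _ (hα'meas.prodMk hGmeas))
      (monotoneIncrSet_closure_range hα'mono hGmono)
end

section
/- Let X_i ⊂ ℝ be compact intervals, μ_i ∈ P(X_i) for i = 1, ..., d, let α : [0,1] → [0,∞) be nondecreasing and bounded, and let b(x_1, ..., x_d) = x_1 + ... + x_d. Then the maximum of R_α(b_# γ) over γ ∈ Γ(μ_1, ..., μ_d) is attained by the comonotone coupling (F_{μ_1}^{-1}, ..., F_{μ_d}^{-1})_# Leb_{[0,1]}, and the maximal value equals ∫_0^1 α(m) (F_{μ_1}^{-1}(m) + ... + F_{μ_d}^{-1}(m)) dm = Σ_{i=1}^d R_α(μ_i). -/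
open MeasureTheory Set Filter Topology Function

namespace Stmt11Aux

/-! ### Basic quantile lemmas -/

def qset (ν : Measure ℝ) (m : ℝ) : Set ℝ := {x : ℝ | ENNReal.ofReal m ≤ ν (Iic x)}

lemma quantile_def (ν : Measure ℝ) (m : ℝ) : quantile ν m = sInf (qset ν m) := rfl

variable {ν : Measure ℝ} {A C : ℝ}

section supported

variable (hν : IsProbabilityMeasure ν) (hAC : A ≤ C) (hsupp : ν (Icc A C) = 1)

include hν hsupp

lemma compl_null : ν (Icc A C)ᶜ = 0 := by
  have : ν (Icc A C)ᶜ = 1 - ν (Icc A C) := prob_compl_eq_one_sub measurableSet_Icc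
  rw [hsupp] at this; simp [this]

lemma Iic_null {x : ℝ} (hx : x < A) : ν (Iic x) = 0 := by
  refine measure_mono_null (fun y hy => ?_) (compl_null hν hsupp)
  simp only [mem_compl_iff, mem_Icc, not_and_or, not_le]
  exact Or.inl (lt_of_le_of_lt hy hx)

lemma qset_subset_Ici {m : ℝ} (hm : 0 < m) : qset ν m ⊆ Ici A := by
  intro x hx
  by_contra h
  simp only [mem_Ici, not_le] at h
  have h0 : ν (Iic x) = 0 := Iic_null hν hsupp h
  simp only [qset, mem_setOf_eq, h0, nonpos_iff_eq_zero, ENNReal.ofReal_eq_zero] at hx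
  linarith

lemma bddBelow_qset {m : ℝ} (hm : 0 < m) : BddBelow (qset ν m) :=
  ⟨A, fun x hx => qset_subset_Ici hν hsupp hm hx⟩

omit hν in
lemma mem_qset_C {m : ℝ} (hm : m ≤ 1) : C ∈ qset ν m := by
  have h1 : ν (Icc A C) ≤ ν (Iic C) := measure_mono (fun y hy => hy.2)
  rw [hsupp] at h1
  simp only [qset, mem_setOf_eq]
  exact le_trans (by simpa using ENNReal.ofReal_le_ofReal hm) h1

lemma le_quantile {m : ℝ} (hm : 0 < m) (hm1 : m ≤ 1) : A ≤ quantile ν m :=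
  le_csInf ⟨C, mem_qset_C hsupp hm1⟩ (fun x hx => qset_subset_Ici hν hsupp hm hx)

include hAC in
lemma quantile_le_C {m : ℝ} (hm : 0 < m) (hm1 : m ≤ 1) : quantile ν m ≤ C :=
  csInf_le (bddBelow_qset hν hsupp hm) (mem_qset_C hsupp hm1)

omit hsupp in
lemma cdf_right_cont {x : ℝ} {t : ENNReal} (h : ∀ y, x < y → t ≤ ν (Iic y)) :
    t ≤ ν (Iic x) := by
  have hIic : Iic x = ⋂ n : ℕ, Iic (x + 1/(n+1)) := by
    ext y
    simp only [mem_Iic, mem_iInter]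
    constructor
    · intro hy n; have : (0:ℝ) < 1/(n+1) := by positivity
      linarith
    · intro hy
      by_contra hc
      rw [not_le] at hc
      obtain ⟨n, hn⟩ := exists_nat_one_div_lt (sub_pos.mpr hc)
      have := hy n
      linarith
  rw [hIic]
  have hanti : Antitone (fun n : ℕ => Iic (x + 1/(n+1))) := by
    intro n m hnm
    apply Iic_subset_Iic.mpr
    have : (1:ℝ)/(m+1) ≤ 1/(n+1) := by
      apply one_div_le_one_div_of_le (by positivity)
      exact_mod_cast by omega
    linarith
  have htend := tendsto_measure_iInter_atTop
    (μ := ν) (fun n => (measurableSet_Iic).nullMeasurableSet) hanti ⟨0, measure_ne_top ν _⟩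
  exact ge_of_tendsto htend (Filter.Eventually.of_forall
    (fun n => h _ (lt_add_of_pos_right x (by positivity))))

lemma quantile_le_iff {m x : ℝ} (hm : 0 < m) (hm1 : m ≤ 1) :
    quantile ν m ≤ x ↔ ENNReal.ofReal m ≤ ν (Iic x) := by
  constructor
  · intro h
    apply cdf_right_cont hν
    intro y hy
    have hlt : sInf (qset ν m) < y := lt_of_le_of_lt h hy
    obtain ⟨z, hz, hzy⟩ := exists_lt_of_csInf_lt ⟨C, mem_qset_C hsupp hm1⟩ hlt
    exact le_trans hz (measure_mono (Iic_subset_Iic.mpr hzy.le))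
  · intro h
    exact csInf_le (bddBelow_qset hν hsupp hm) h

lemma quantile_mono {m m' : ℝ} (hm : 0 < m) (hmm : m ≤ m') (hm1 : m' ≤ 1) :
    quantile ν m ≤ quantile ν m' := by
  apply csInf_le_csInf (bddBelow_qset hν hsupp hm) ⟨C, mem_qset_C hsupp hm1⟩
  intro x hx
  exact le_trans (ENNReal.ofReal_le_ofReal hmm) hx

omit hν hsupp in
lemma quantile_of_nonpos {m : ℝ} (hm : m ≤ 0) : quantile ν m = 0 := by
  have : qset ν m = univ := by
    ext x; simp [qset, ENNReal.ofReal_eq_zero.mpr hm]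
  rw [quantile_def, this]
  exact Real.sInf_of_not_bddBelow not_bddBelow_univ

omit hsupp in
lemma quantile_of_one_lt {m : ℝ} (hm : 1 < m) : quantile ν m = 0 := by
  have : qset ν m = ∅ := by
    ext x
    simp only [qset, mem_setOf_eq, mem_empty_iff_false, iff_false, not_le]
    calc ν (Iic x) ≤ 1 := prob_le_one
    _ = ENNReal.ofReal 1 := by simp
    _ < ENNReal.ofReal m := by
        rw [ENNReal.ofReal_lt_ofReal_iff (by linarith)]; exact hm
  rw [quantile_def, this]
  exact Real.sInf_empty

/-- Monotone global extension of the quantile function. -/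
noncomputable def qext (ν : Measure ℝ) (A : ℝ) (m : ℝ) : ℝ :=
  if m ≤ 0 then A else quantile ν (min m 1)

include hAC in
lemma qext_mono : Monotone (qext ν A) := by
  intro m m' hmm
  unfold qext
  rcases le_or_gt m 0 with h0 | h0
  · rcases le_or_gt m' 0 with h0' | h0'
    · simp [h0, h0']
    · rw [if_pos h0, if_neg (not_le.mpr h0')]
      exact le_quantile hν hsupp (lt_min h0' one_pos) (min_le_right _ _)
  · rw [if_neg (not_le.mpr h0), if_neg (not_le.mpr (lt_of_lt_of_le h0 hmm))]
    exact quantile_mono hν hsupp (lt_min h0 one_pos) (min_le_min hmm le_rfl)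
      (min_le_right _ _)

omit hsupp in
lemma quantile_eq_indicator : quantile ν = (Ioc (0:ℝ) 1).indicator (qext ν A) := by
  funext m
  by_cases hm : m ∈ Ioc (0:ℝ) 1
  · rw [indicator_of_mem hm]
    unfold qext
    rw [if_neg (not_le.mpr hm.1), min_eq_left hm.2]
  · rw [indicator_of_notMem hm]
    simp only [mem_Ioc, not_and_or, not_lt, not_le] at hm
    rcases hm with h | h
    · exact quantile_of_nonpos h
    · exact quantile_of_one_lt hν h

include hAC in
lemma measurable_quantile : Measurable (quantile ν) := by
  rw [quantile_eq_indicator hν (A := A)]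

  exact ((qext_mono hν hAC hsupp).measurable).indicator measurableSet_Ioc

include hAC in
lemma abs_quantile_le (m : ℝ) : |quantile ν m| ≤ max |A| |C| := by
  have hmax : (0:ℝ) ≤ max |A| |C| := le_max_iff.mpr (Or.inl (abs_nonneg A))
  rcases le_or_gt m 0 with h | h
  · rw [quantile_of_nonpos h, abs_zero]; exact hmax
  · rcases le_or_gt m 1 with h1 | h1
    · rw [abs_le]
      constructor
      · calc -(max |A| |C|) ≤ -|A| := by simp
          _ ≤ A := neg_abs_le A
          _ ≤ quantile ν m := le_quantile hν hsupp h h1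
      · calc quantile ν m ≤ C := quantile_le_C hν hAC hsupp h h1
          _ ≤ |C| := le_abs_self C
          _ ≤ max |A| |C| := le_max_right _ _
    · rw [quantile_of_one_lt hν h1, abs_zero]; exact hmax

end supported

lemma lebI_apply {s : Set ℝ} (hs : MeasurableSet s) : lebI s = volume (s ∩ Icc 0 1) := by
  rw [lebI, Measure.restrict_apply hs]

instance : IsProbabilityMeasure lebI := by
  constructor
  rw [lebI, Measure.restrict_apply_univ, Real.volume_Icc]
  norm_num

section supported

variable (hν : IsProbabilityMeasure ν) (hAC : A ≤ C) (hsupp : ν (Icc A C) = 1)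

include hν hAC hsupp

/-- Key pushforward lemma: the quantile function pushes Lebesgue measure on `[0,1]`
forward to `ν`. -/
lemma map_quantile : lebI.map (quantile ν) = ν := by
  have hq : Measurable (quantile ν) := measurable_quantile hν hAC hsupp
  have : IsProbabilityMeasure (lebI.map (quantile ν)) :=
    Measure.isProbabilityMeasure_map hq.aemeasurable
  refine Measure.ext_of_Iic _ _ (fun x => ?_)
  rw [Measure.map_apply hq measurableSet_Iic]
  have hx1 : ν (Iic x) ≤ 1 := prob_le_one
  set t : ℝ := (ν (Iic x)).toReal with ht
  have htnn : 0 ≤ t := ENNReal.toReal_nonneg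
  have ht1 : t ≤ 1 := by
    rw [ht]
    exact ENNReal.toReal_le_of_le_ofReal one_pos.le (by simpa using hx1)
  have hS : quantile ν ⁻¹' Iic x ∩ Ioc 0 1 = Ioc 0 t := by
    ext m
    simp only [mem_inter_iff, mem_preimage, mem_Iic, mem_Ioc]
    constructor
    · rintro ⟨hqm, hm0, hm1⟩
      refine ⟨hm0, ?_⟩
      rw [quantile_le_iff hν hsupp hm0 hm1] at hqm
      rwa [ENNReal.ofReal_le_iff_le_toReal (measure_ne_top ν _)] at hqm
    · rintro ⟨hm0, hmt⟩
      have hm1 : m ≤ 1 := le_trans hmt ht1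
      refine ⟨?_, hm0, hm1⟩
      rw [quantile_le_iff hν hsupp hm0 hm1,
        ENNReal.ofReal_le_iff_le_toReal (measure_ne_top ν _)]
      exact hmt
  have hIic : lebI (quantile ν ⁻¹' Iic x) = volume (quantile ν ⁻¹' Iic x ∩ Icc 0 1) :=
    lebI_apply (hq measurableSet_Iic)
  have hicc : volume (quantile ν ⁻¹' Iic x ∩ Icc 0 1) = volume (Ioc 0 t) := by
    apply le_antisymm
    · calc volume (quantile ν ⁻¹' Iic x ∩ Icc 0 1)
          ≤ volume ((quantile ν ⁻¹' Iic x ∩ Ioc 0 1) ∪ {0}) := by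
            apply measure_mono
            rintro m ⟨hm1, hm2⟩
            rcases eq_or_lt_of_le hm2.1 with h0 | h0
            · exact Or.inr (by simp [← h0])
            · exact Or.inl ⟨hm1, h0, hm2.2⟩
        _ ≤ volume (quantile ν ⁻¹' Iic x ∩ Ioc 0 1) + volume ({0} : Set ℝ) :=
            measure_union_le _ _
        _ = volume (Ioc 0 t) := by rw [hS, Real.volume_singleton, add_zero]
    · rw [← hS]
      exact measure_mono (inter_subset_inter_right _ Ioc_subset_Icc_self)
  rw [hIic, hicc, Real.volume_Ioc, sub_zero, ht, ENNReal.ofReal_toReal (measure_ne_top ν _)]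

/-- The mean of `ν` equals the integral of its quantile function. -/
lemma integral_quantile : ∫ m in Icc (0:ℝ) 1, quantile ν m = ∫ x, x ∂ν := by
  conv_rhs => rw [← map_quantile hν hAC hsupp]
  rw [show (fun x : ℝ => x) = id from rfl, integral_map
    (measurable_quantile hν hAC hsupp).aemeasurable aestronglyMeasurable_id]
  rfl

/-- Pushforward computation for `(x - z)⁺`-type integrals. -/
lemma integral_posPart (z : ℝ) :
    ∫ x, max (x - z) 0 ∂ν = ∫ m in Icc (0:ℝ) 1, max (quantile ν m - z) 0 := by
  conv_lhs => rw [← map_quantile hν hAC hsupp]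
  rw [integral_map (measurable_quantile hν hAC hsupp).aemeasurable]
  · rfl
  · exact ((measurable_id.sub_const z).max measurable_const).aestronglyMeasurable

end supported

section monot

variable {Q : ℝ → ℝ} (hQmeas : Measurable Q) (hAC : A ≤ C)
  (hQmono : ∀ m ∈ Ioc (0:ℝ) 1, ∀ m' ∈ Ioc (0:ℝ) 1, m ≤ m' → Q m ≤ Q m')
  (hQmem : ∀ m ∈ Ioc (0:ℝ) 1, Q m ∈ Icc A C)

include hQmeas hQmono hQmem

lemma map_mono_supp : (lebI.map Q) (Icc A C) = 1 := by
  have h1 : (lebI.map Q) (Icc A C) ≤ 1 := by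
    have : IsProbabilityMeasure (lebI.map Q) := Measure.isProbabilityMeasure_map hQmeas.aemeasurable
    exact prob_le_one
  refine le_antisymm h1 ?_
  rw [Measure.map_apply hQmeas measurableSet_Icc, lebI_apply (hQmeas measurableSet_Icc)]
  calc (1:ENNReal) = volume (Ioc (0:ℝ) 1) := by rw [Real.volume_Ioc]; norm_num
    _ ≤ volume (Q ⁻¹' Icc A C ∩ Icc 0 1) := by
        apply measure_mono
        intro y hy
        exact ⟨hQmem y hy, Ioc_subset_Icc_self hy⟩

lemma quantile_map_le {m m' : ℝ} (hm : m ∈ Ioo (0:ℝ) 1) (hm' : m' ∈ Ioc m 1) :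
    quantile (lebI.map Q) m ≤ Q m' := by
  have hprob : IsProbabilityMeasure (lebI.map Q) := Measure.isProbabilityMeasure_map hQmeas.aemeasurable
  have hsupp0 := map_mono_supp hQmeas hQmono hQmem
  apply csInf_le (bddBelow_qset hprob hsupp0 hm.1)
  show ENNReal.ofReal m ≤ (lebI.map Q) (Iic (Q m'))
  rw [Measure.map_apply hQmeas measurableSet_Iic, lebI_apply (hQmeas measurableSet_Iic)]
  have hm'01 : m' ∈ Ioc (0:ℝ) 1 := ⟨lt_trans hm.1 hm'.1, hm'.2⟩
  calc ENNReal.ofReal m ≤ ENNReal.ofReal m' := ENNReal.ofReal_le_ofReal hm'.1.le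
    _ = volume (Ioc 0 m') := by rw [Real.volume_Ioc, sub_zero]
    _ ≤ volume (Q ⁻¹' Iic (Q m') ∩ Icc 0 1) := by
        apply measure_mono
        intro y hy
        refine ⟨hQmono y ⟨hy.1, le_trans hy.2 hm'01.2⟩ m' hm'01 hy.2,
          hy.1.le, le_trans hy.2 hm'01.2⟩

lemma le_quantile_map {m m'' : ℝ} (hm : m ∈ Ioo (0:ℝ) 1) (hm'' : m'' ∈ Ioo 0 m) :
    Q m'' ≤ quantile (lebI.map Q) m := by
  have hprob : IsProbabilityMeasure (lebI.map Q) := Measure.isProbabilityMeasure_map hQmeas.aemeasurable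
  have hsupp0 := map_mono_supp hQmeas hQmono hQmem
  apply le_csInf ⟨C, mem_qset_C hsupp0 hm.2.le⟩
  intro x hx
  by_contra hc
  rw [not_le] at hc
  have hFx : (lebI.map Q) (Iic x) ≤ ENNReal.ofReal m'' := by
    rw [Measure.map_apply hQmeas measurableSet_Iic, lebI_apply (hQmeas measurableSet_Iic)]
    calc volume (Q ⁻¹' Iic x ∩ Icc 0 1) ≤ volume (Ico (0:ℝ) m'') := by
          apply measure_mono
          rintro y ⟨hy1, hy2⟩
          simp only [mem_preimage, mem_Iic] at hy1
          refine ⟨hy2.1, ?_⟩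
          by_contra hy3
          rw [not_lt] at hy3
          have h0y : 0 < y := lt_of_lt_of_le hm''.1 hy3
          have := hQmono m'' ⟨hm''.1, le_trans hm''.2.le hm.2.le⟩ y ⟨h0y, hy2.2⟩ hy3
          linarith
      _ = ENNReal.ofReal m'' := by rw [Real.volume_Ico, sub_zero]
  have hmlt : ENNReal.ofReal m ≤ ENNReal.ofReal m'' := le_trans hx hFx
  rw [ENNReal.ofReal_le_ofReal_iff hm''.1.le] at hmlt
  linarith [hm''.2]

include hAC in
/-- A.e. identification of the quantile of a pushforward of a monotone function. -/
lemma quantile_map_ae : quantile (lebI.map Q) =ᵐ[lebI] Q := by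
  classical
  set Qb : ℝ → ℝ := fun m => if m ≤ 0 then A else Q (min m 1) with hQb
  have hQbmono : Monotone Qb := by
    intro m m' hmm
    simp only [hQb]
    rcases le_or_gt m 0 with h0 | h0
    · rcases le_or_gt m' 0 with h0' | h0'
      · simp [h0, h0']
      · rw [if_pos h0, if_neg (not_le.mpr h0')]
        exact (hQmem _ ⟨lt_min h0' one_pos, min_le_right _ _⟩).1
    · rw [if_neg (not_le.mpr h0), if_neg (not_le.mpr (lt_of_lt_of_le h0 hmm))]
      exact hQmono _ ⟨lt_min h0 one_pos, min_le_right _ _⟩ _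
        ⟨lt_min (lt_of_lt_of_le h0 hmm) one_pos, min_le_right _ _⟩
        (min_le_min hmm le_rfl)
  have hQbeq : ∀ m ∈ Ioc (0:ℝ) 1, Qb m = Q m := by
    intro m hm
    simp only [hQb]
    rw [if_neg (not_le.mpr hm.1), min_eq_left hm.2]
  set E := {m : ℝ | ¬ContinuousAt Qb m} with hE
  have hEc : E.Countable := hQbmono.countable_not_continuousAt
  have key : ∀ m ∈ Ioo (0:ℝ) 1, m ∉ E → quantile (lebI.map Q) m = Q m := by
    intro m hm hmE
    simp only [hE, mem_setOf_eq, not_not] at hmE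
    rw [Metric.continuousAt_iff] at hmE
    have hup : ∀ ε > (0:ℝ), quantile (lebI.map Q) m ≤ Q m + ε := by
      intro ε hε
      obtain ⟨δ, hδ, hd⟩ := hmE ε hε
      set m' := min (m + δ/2) ((m+1)/2) with hm'
      have hmm' : m < m' := lt_min (by linarith) (by linarith [hm.2])
      have hm'1 : m' ≤ 1 := le_trans (min_le_right _ _) (by linarith [hm.2])
      have hdist : dist m' m < δ := by
        rw [Real.dist_eq, abs_of_nonneg (by linarith : (0:ℝ) ≤ m' - m)]
        have : m' ≤ m + δ/2 := min_le_left _ _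
        linarith
      have := hd hdist
      rw [Real.dist_eq] at this
      have hQm' : Qb m' ≤ Qb m + ε := by
        have := abs_lt.mp this
        linarith [this.1, this.2]
      rw [hQbeq m' ⟨lt_trans hm.1 hmm', hm'1⟩, hQbeq m ⟨hm.1, hm.2.le⟩] at hQm'
      exact le_trans (quantile_map_le hQmeas hQmono hQmem hm ⟨hmm', hm'1⟩) hQm'
    have hlo : ∀ ε > (0:ℝ), Q m - ε ≤ quantile (lebI.map Q) m := by
      intro ε hε
      obtain ⟨δ, hδ, hd⟩ := hmE ε hε
      set m'' := max (m - δ/2) (m/2) with hm''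
      have hm''m : m'' < m := max_lt (by linarith) (by linarith [hm.1])
      have hm''0 : 0 < m'' := lt_of_lt_of_le (by linarith [hm.1] : (0:ℝ) < m/2) (le_max_right _ _)
      have hdist : dist m'' m < δ := by
        rw [Real.dist_eq, abs_of_nonpos (by linarith : m'' - m ≤ 0)]
        have : m - δ/2 ≤ m'' := le_max_left _ _
        linarith
      have := hd hdist
      rw [Real.dist_eq] at this
      have hQm'' : Qb m - ε ≤ Qb m'' := by
        have := abs_lt.mp this
        linarith [this.1, this.2]
      rw [hQbeq m'' ⟨hm''0, by linarith [hm.2]⟩, hQbeq m ⟨hm.1, hm.2.le⟩] at hQm''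
      exact le_trans hQm'' (le_quantile_map hQmeas hQmono hQmem hm ⟨hm''0, hm''m⟩)
    have h1 : quantile (lebI.map Q) m ≤ Q m := le_of_forall_pos_le_add hup
    have h2 : Q m ≤ quantile (lebI.map Q) m := by
      refine le_of_forall_pos_le_add (fun ε hε => ?_)
      linarith [hlo ε hε]
    linarith
  rw [Filter.EventuallyEq, ae_iff]
  rw [lebI, Measure.restrict_apply' measurableSet_Icc]
  refine measure_mono_null (t := ({0, 1} : Set ℝ) ∪ E) ?_
    (Set.Countable.measure_zero ((Set.countable_insert.mpr
      (Set.countable_singleton 1)).union hEc) _)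
  rintro y ⟨hy1, hy2⟩
  simp only [mem_setOf_eq] at hy1
  by_cases hyIoo : y ∈ Ioo (0:ℝ) 1
  · by_cases hyE : y ∈ E
    · exact Or.inr hyE
    · exact absurd (key y hyIoo hyE) hy1
  · left
    simp only [mem_Ioo, not_and_or, not_lt] at hyIoo
    rcases hyIoo with h | h
    · have : y = 0 := le_antisymm h hy2.1
      simp [this]
    · have : y = 1 := le_antisymm hy2.2 h
      simp [this]

end monot

/-! ### Expected shortfall -/

noncomputable def ES (t : ℝ) (ν : Measure ℝ) : ℝ := ∫ m in Icc t 1, quantile ν m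

section supported2

variable (hν : IsProbabilityMeasure ν) (hAC : A ≤ C) (hsupp : ν (Icc A C) = 1)

lemma volume_Icc_lt {u v : ℝ} : volume (Icc u v) < ⊤ := by
  rw [Real.volume_Icc]; exact ENNReal.ofReal_lt_top

lemma volume_Ioc_lt {u v : ℝ} : volume (Ioc u v) < ⊤ := by
  rw [Real.volume_Ioc]; exact ENNReal.ofReal_lt_top

include hν hAC hsupp

lemma integrableOn_quantile {s : Set ℝ} (hs : volume s < ⊤) :
    IntegrableOn (quantile ν) s volume := by
  haveI : IsFiniteMeasure (volume.restrict s) :=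
    ⟨by rwa [Measure.restrict_apply_univ]⟩
  refine Integrable.mono' (integrable_const (max |A| |C|))
    (measurable_quantile hν hAC hsupp).aestronglyMeasurable ?_
  exact Filter.Eventually.of_forall (abs_quantile_le hν hAC hsupp)

/-- The Rockafellar–Uryasev identity at the quantile. -/
lemma posPart_integral_eq {t : ℝ} (ht : t ∈ Ioc (0:ℝ) 1) :
    ∫ x, max (x - quantile ν t) 0 ∂ν = ES t ν - quantile ν t * (1 - t) := by
  set z := quantile ν t with hz
  rw [integral_posPart hν hAC hsupp]
  have hsplit : Icc (0:ℝ) 1 = Icc 0 t ∪ Ioc t 1 := (Icc_union_Ioc_eq_Icc ht.1.le ht.2).symm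
  have hint : ∀ s : Set ℝ, volume s < ⊤ → IntegrableOn (fun m => max (quantile ν m - z) 0) s volume := by
    intro s hs
    haveI : IsFiniteMeasure (volume.restrict s) := ⟨by rwa [Measure.restrict_apply_univ]⟩
    refine Integrable.mono' (integrable_const (max |A| |C| + |z|))
      (((measurable_quantile hν hAC hsupp).sub_const z).max measurable_const).aestronglyMeasurable ?_
    refine Filter.Eventually.of_forall (fun m => ?_)
    have h1 := abs_quantile_le hν hAC hsupp m
    rw [abs_le] at h1
    rw [Real.norm_eq_abs, abs_le]
    constructor
    · have h0 : (0:ℝ) ≤ max (quantile ν m - z) 0 := le_max_right _ _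
      have hA : (0:ℝ) ≤ |A| ⊔ |C| := le_trans (abs_nonneg A) (le_max_left _ _)
      linarith [abs_nonneg z]
    · rcases max_cases (quantile ν m - z) 0 with ⟨h, _⟩ | ⟨h, _⟩ <;> rw [h]
      · have := neg_abs_le z
        linarith [h1.2]
      · positivity
  rw [hsplit, setIntegral_union (Iic_disjoint_Ioc (le_refl t) |>.mono_left Icc_subset_Iic_self) measurableSet_Ioc
    (hint _ volume_Icc_lt) (hint _ volume_Ioc_lt)]
  have h0 : ∫ m in Icc (0:ℝ) t, max (quantile ν m - z) 0 = 0 := by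
    apply integral_eq_zero_of_ae
    have hmem := ae_restrict_mem (μ := volume) (measurableSet_Icc : MeasurableSet (Icc (0:ℝ) t))
    have hne : ∀ᵐ m ∂(volume.restrict (Icc (0:ℝ) t)), m ≠ 0 := by
      refine ae_restrict_of_ae ?_
      rw [ae_iff]
      apply measure_mono_null (t := {(0:ℝ)}) (fun y hy => by simpa using hy)
      exact Real.volume_singleton
    filter_upwards [hmem, hne] with m hm hm0
    have hm' : 0 < m := lt_of_le_of_ne hm.1 (Ne.symm hm0)
    have : quantile ν m ≤ z := quantile_mono hν hsupp hm' hm.2 ht.2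
    simp [max_eq_right, sub_nonpos.mpr this]
  have h1 : ∫ m in Ioc t 1, max (quantile ν m - z) 0 = ∫ m in Ioc t 1, (quantile ν m - z) := by
    refine setIntegral_congr_fun measurableSet_Ioc (fun m hm => ?_)
    have : z ≤ quantile ν m := quantile_mono hν hsupp ht.1 hm.1.le hm.2
    simp [max_eq_left, sub_nonneg.mpr this]
  have h2 : ∫ m in Ioc t 1, (quantile ν m - z) = (∫ m in Ioc t 1, quantile ν m) - z * (1 - t) := by
    rw [integral_sub (integrableOn_quantile hν hAC hsupp volume_Ioc_lt)
      (integrableOn_const volume_Ioc_lt.ne), setIntegral_const, measureReal_def, Real.volume_Ioc,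
      ENNReal.toReal_ofReal (by linarith [ht.2] : (0:ℝ) ≤ 1 - t), smul_eq_mul]
    ring
  rw [h0, h1, h2, zero_add, ES, integral_Icc_eq_integral_Ioc]

/-- Rockafellar–Uryasev inequality. -/
lemma ES_le_RU {t : ℝ} (ht : t ∈ Ioc (0:ℝ) 1) (z : ℝ) :
    ES t ν ≤ z * (1 - t) + ∫ x, max (x - z) 0 ∂ν := by
  have hint : ∀ s : Set ℝ, volume s < ⊤ → IntegrableOn (fun m => max (quantile ν m - z) 0) s volume := by
    intro s hs
    haveI : IsFiniteMeasure (volume.restrict s) := ⟨by rwa [Measure.restrict_apply_univ]⟩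
    refine Integrable.mono' (integrable_const (max |A| |C| + |z|))
      (((measurable_quantile hν hAC hsupp).sub_const z).max measurable_const).aestronglyMeasurable ?_
    refine Filter.Eventually.of_forall (fun m => ?_)
    have h1 := abs_quantile_le hν hAC hsupp m
    rw [abs_le] at h1
    rw [Real.norm_eq_abs, abs_le]
    constructor
    · have h0 : (0:ℝ) ≤ max (quantile ν m - z) 0 := le_max_right _ _
      have hA : (0:ℝ) ≤ |A| ⊔ |C| := le_trans (abs_nonneg A) (le_max_left _ _)
      linarith [abs_nonneg z]
    · rcases max_cases (quantile ν m - z) 0 with ⟨h, _⟩ | ⟨h, _⟩ <;> rw [h]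
      · have := neg_abs_le z
        linarith [h1.2]
      · positivity
  rw [integral_posPart hν hAC hsupp]
  have step1 : ES t ν ≤ (∫ m in Icc t 1, max (quantile ν m - z) 0) + z * (1 - t) := by
    have : ∫ m in Icc t 1, quantile ν m ≤ ∫ m in Icc t 1, (max (quantile ν m - z) 0 + z) := by
      refine setIntegral_mono (integrableOn_quantile hν hAC hsupp volume_Icc_lt) ?_ (fun m => ?_)
      · exact (hint _ volume_Icc_lt).add (integrableOn_const volume_Icc_lt.ne)
      · rcases le_or_gt (quantile ν m) z with h | h
        · calc quantile ν m ≤ z := h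
            _ ≤ max (quantile ν m - z) 0 + z := by simp [le_max_right]
        · rw [max_eq_left (by linarith)]; linarith
    rw [integral_add (hint _ volume_Icc_lt) (integrableOn_const volume_Icc_lt.ne),
      setIntegral_const, measureReal_def, Real.volume_Icc,
      ENNReal.toReal_ofReal (by linarith [ht.2] : (0:ℝ) ≤ 1 - t), smul_eq_mul] at this
    calc ES t ν = ∫ m in Icc t 1, quantile ν m := rfl
      _ ≤ _ := this
      _ = (∫ m in Icc t 1, max (quantile ν m - z) 0) + z * (1 - t) := by ring
  have step2 : (∫ m in Icc t 1, max (quantile ν m - z) 0) ≤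
      ∫ m in Icc (0:ℝ) 1, max (quantile ν m - z) 0 := by
    refine setIntegral_mono_set (hint _ volume_Icc_lt) ?_ ?_
    · exact Filter.Eventually.of_forall (fun m => le_max_right _ _)
    · exact HasSubset.Subset.eventuallyLE (Icc_subset_Icc ht.1.le le_rfl)
  linarith

lemma ae_mem_Icc : ∀ᵐ x ∂ν, x ∈ Icc A C := by
  rw [ae_iff]
  refine measure_mono_null (t := (Icc A C)ᶜ) (fun y hy => hy) (compl_null hν hsupp)

lemma integrable_posPart_nu (z : ℝ) : Integrable (fun x => max (x - z) 0) ν := by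
  refine Integrable.mono' (integrable_const (|A| + |C| + |z|))
    ((measurable_id.sub_const z).max measurable_const).aestronglyMeasurable ?_
  filter_upwards [ae_mem_Icc hν hAC hsupp] with x hx
  rw [Real.norm_eq_abs, abs_le]
  have h1 : -|A| ≤ A := neg_abs_le A
  have h2 : C ≤ |C| := le_abs_self C
  have h3 : -|z| ≤ z := neg_abs_le z
  have h4 : z ≤ |z| := le_abs_self z
  constructor
  · have : (0:ℝ) ≤ max (x - z) 0 := le_max_right _ _
    have := abs_nonneg A; have := abs_nonneg C; have := abs_nonneg z
    linarith
  · have := abs_nonneg A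
    rcases max_cases (x - z) 0 with ⟨h, _⟩ | ⟨h, _⟩ <;> rw [h]
    · linarith [hx.2]
    · have := abs_nonneg A; have := abs_nonneg C; have := abs_nonneg z
      linarith

lemma integrable_id_nu : Integrable (fun x : ℝ => x) ν := by
  refine Integrable.mono' (integrable_const (|A| + |C|))
    measurable_id.aestronglyMeasurable ?_
  filter_upwards [ae_mem_Icc hν hAC hsupp] with x hx
  rw [Real.norm_eq_abs, abs_le]
  have h1 : -|A| ≤ A := neg_abs_le A
  have h2 : C ≤ |C| := le_abs_self C
  have := abs_nonneg A; have := abs_nonneg C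
  exact ⟨by linarith [hx.1], by linarith [hx.2]⟩

end supported2


/-! ### Stieltjes decomposition of the spectral risk -/

section stieltjes

variable {α : ℝ → ℝ} (hα_mono : MonotoneOn α (Icc 0 1))

/-- Monotone global extension of `α`. -/
def abar (α : ℝ → ℝ) (m : ℝ) : ℝ := α (max 0 (min 1 m))

include hα_mono

lemma abar_mono : Monotone (abar α) := by
  intro m m' hmm
  apply hα_mono
  · exact ⟨le_max_left _ _, max_le zero_le_one (min_le_left _ _)⟩
  · exact ⟨le_max_left _ _, max_le zero_le_one (min_le_left _ _)⟩
  · exact max_le_max le_rfl (min_le_min le_rfl hmm)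

omit hα_mono in
lemma abar_eq {m : ℝ} (hm : m ∈ Icc (0:ℝ) 1) : abar α m = α m := by
  rw [abar, min_eq_right hm.2, max_eq_right hm.1]

/-- The right-continuous modification of `α` as a Stieltjes function. -/
noncomputable def sf (hα_mono : MonotoneOn α (Icc 0 1)) : StieltjesFunction ℝ :=
  (abar_mono hα_mono).stieltjesFunction

lemma sf_eq_of_continuousAt {m : ℝ} (hc : ContinuousAt (abar α) m) :
    sf hα_mono m = abar α m := by
  rw [sf, Monotone.stieltjesFunction_eq]
  exact rightLim_eq_of_tendsto
    (hc.tendsto.mono_left nhdsWithin_le_nhds)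

/-- `α` agrees with its Stieltjes modification a.e. on `[0,1]`. -/
lemma alpha_ae_sf : α =ᵐ[lebI] sf hα_mono := by
  have hEc : {m : ℝ | ¬ContinuousAt (abar α) m}.Countable :=
    (abar_mono hα_mono).countable_not_continuousAt
  rw [Filter.EventuallyEq, ae_iff, lebI, Measure.restrict_apply' measurableSet_Icc]
  refine measure_mono_null (t := {m : ℝ | ¬ContinuousAt (abar α) m}) ?_
    (Set.Countable.measure_zero hEc _)
  rintro y ⟨hy1, hy2⟩
  simp only [mem_setOf_eq] at hy1 ⊢
  intro hc
  exact hy1 (by rw [← abar_eq (α := α) hy2, sf_eq_of_continuousAt hα_mono hc])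

lemma sf_mono : Monotone (sf hα_mono) := (sf hα_mono).mono

lemma sf_diff {m : ℝ} (hm : m ∈ Icc (0:ℝ) 1) :
    ((sf hα_mono).measure (Ioc 0 m)).toReal = sf hα_mono m - sf hα_mono 0 := by
  rw [StieltjesFunction.measure_Ioc, ENNReal.toReal_ofReal (sub_nonneg.mpr (sf_mono hα_mono hm.1))]

lemma sf_measure_Ioc_lt : (sf hα_mono).measure (Ioc (0:ℝ) 1) < ⊤ := by
  rw [StieltjesFunction.measure_Ioc]
  exact ENNReal.ofReal_lt_top

end stieltjes

section decomp

variable (hν : IsProbabilityMeasure ν) (hAC : A ≤ C) (hsupp : ν (Icc A C) = 1)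
variable {α : ℝ → ℝ} (hα_mono : MonotoneOn α (Icc 0 1))

include hν hAC hsupp

/-- Fubini decomposition: `∫ q·f = f(0)·mean(ν) + ∫ ES dρ`. -/
lemma specRisk_decomp :
    (∫ m in Icc (0:ℝ) 1, quantile ν m * sf hα_mono m)
      = sf hα_mono 0 * (∫ x, x ∂ν)
        + ∫ t in Ioc (0:ℝ) 1, ES t ν ∂(sf hα_mono).measure ∧
    IntegrableOn (fun t => ES t ν) (Ioc (0:ℝ) 1) (sf hα_mono).measure := by
  classical
  set f := sf hα_mono with hf
  set ρ' := f.measure.restrict (Ioc (0:ℝ) 1) with hρ'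
  haveI hfin : IsFiniteMeasure ρ' := by
    constructor
    rw [hρ', Measure.restrict_apply_univ]
    exact sf_measure_Ioc_lt hα_mono
  set F : ℝ × ℝ → ℝ := fun p => quantile ν p.1 * (if p.2 ≤ p.1 then (1:ℝ) else 0) with hF
  have hFmeas : Measurable F := by
    apply Measurable.mul
    · exact (measurable_quantile hν hAC hsupp).comp measurable_fst
    · exact Measurable.ite (measurableSet_le measurable_snd measurable_fst)
        measurable_const measurable_const
  have hFint : Integrable F (lebI.prod ρ') := by
    refine Integrable.mono' (integrable_const (max |A| |C|)) hFmeas.aestronglyMeasurable ?_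
    refine Filter.Eventually.of_forall (fun p => ?_)
    rw [Real.norm_eq_abs, hF, abs_mul]
    calc |quantile ν p.1| * |if p.2 ≤ p.1 then (1:ℝ) else 0|
        ≤ max |A| |C| * 1 := by
          apply mul_le_mul (abs_quantile_le hν hAC hsupp p.1) _ (abs_nonneg _)
            (le_trans (abs_nonneg A) (le_max_left _ _))
          split <;> simp
      _ = max |A| |C| := mul_one _
  have hinner_t : ∀ m : ℝ, (∫ t, F (m, t) ∂ρ') = quantile ν m * (ρ' (Iic m)).toReal := by
    intro m
    have : (fun t => F (m, t)) = fun t => quantile ν m * (Iic m).indicator (fun _ => (1:ℝ)) t := by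
      funext t
      rw [hF]
      by_cases h : t ≤ m <;> simp [h]
    rw [this, integral_const_mul, integral_indicator_const (1:ℝ) measurableSet_Iic, smul_eq_mul,
      mul_one, measureReal_def]
  have hrho_Iic : ∀ m ∈ Icc (0:ℝ) 1, ρ' (Iic m) = f.measure (Ioc 0 m) := by
    intro m hm
    rw [hρ', Measure.restrict_apply measurableSet_Iic]
    congr 1
    ext t
    simp only [mem_inter_iff, mem_Iic, mem_Ioc]
    exact ⟨fun ⟨h1, h2, _⟩ => ⟨h2, h1⟩, fun ⟨h1, h2⟩ => ⟨h2, h1, le_trans h2 hm.2⟩⟩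
  have stepA : (∫ m in Icc (0:ℝ) 1, quantile ν m * f m)
      = ∫ m in Icc (0:ℝ) 1, (quantile ν m * f 0 + ∫ t, F (m, t) ∂ρ') := by
    refine setIntegral_congr_fun measurableSet_Icc (fun m hm => ?_)
    rw [hinner_t m, hrho_Iic m hm, sf_diff hα_mono hm]
    ring
  have hq_int : IntegrableOn (fun m => quantile ν m * f 0) (Icc (0:ℝ) 1) volume :=
    (integrableOn_quantile hν hAC hsupp volume_Icc_lt).mul_const _
  have hinner_int : Integrable (fun m => ∫ t, F (m, t) ∂ρ') lebI :=
    hFint.integral_prod_left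
  have stepB : (∫ m in Icc (0:ℝ) 1, (quantile ν m * f 0 + ∫ t, F (m, t) ∂ρ'))
      = (∫ m in Icc (0:ℝ) 1, quantile ν m * f 0)
        + ∫ m in Icc (0:ℝ) 1, (∫ t, F (m, t) ∂ρ') := by
    rw [show volume.restrict (Icc (0:ℝ) 1) = lebI from rfl]
    exact integral_add (by rwa [lebI]) hinner_int
  have stepC : (∫ m in Icc (0:ℝ) 1, quantile ν m * f 0) = f 0 * ∫ x, x ∂ν := by
    rw [show (fun m => quantile ν m * f 0) = fun m => f 0 * quantile ν m from by
      funext m; ring]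
    rw [integral_const_mul, integral_quantile hν hAC hsupp]
  have stepD : (∫ m in Icc (0:ℝ) 1, (∫ t, F (m, t) ∂ρ'))
      = ∫ t, (∫ m, F (m, t) ∂lebI) ∂ρ' := by
    rw [show volume.restrict (Icc (0:ℝ) 1) = lebI from rfl]
    exact integral_integral_swap hFint
  have stepE : ∀ t ∈ Ioc (0:ℝ) 1, (∫ m, F (m, t) ∂lebI) = ES t ν := by
    intro t ht
    have h1 : (fun m => F (m, t)) = (Ici t).indicator (quantile ν) := by
      funext m
      rw [hF]
      simp only [indicator_apply, mem_Ici]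
      split <;> simp
    rw [h1, integral_indicator measurableSet_Ici, lebI, Measure.restrict_restrict measurableSet_Ici]
    have h2 : Ici t ∩ Icc (0:ℝ) 1 = Icc t 1 := by
      ext m
      simp only [mem_inter_iff, mem_Ici, mem_Icc]
      exact ⟨fun ⟨h1', h2'⟩ => ⟨h1', h2'.2⟩, fun ⟨h1', h2'⟩ => ⟨h1', le_trans ht.1.le h1', h2'⟩⟩
    rw [h2]
    rfl
  have hES_int : IntegrableOn (fun t => ES t ν) (Ioc (0:ℝ) 1) f.measure := by
    have h0 : Integrable (fun t => ∫ m, F (m, t) ∂lebI) ρ' := hFint.integral_prod_right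
    refine (h0.congr ?_)
    filter_upwards [ae_restrict_mem measurableSet_Ioc] with t ht
    exact stepE t ht
  constructor
  · rw [stepA, stepB, stepC, stepD]
    congr 1
    rw [hρ']
    refine setIntegral_congr_fun measurableSet_Ioc (fun t ht => stepE t ht)
  · exact hES_int

end decomp

section mulint

variable (hν : IsProbabilityMeasure ν) (hAC : A ≤ C) (hsupp : ν (Icc A C) = 1)
variable {α : ℝ → ℝ} (hα_mono : MonotoneOn α (Icc 0 1))

include hν hAC hsupp hα_mono

lemma abar_bound (m : ℝ) : |(abar α) m| ≤ max |α 0| |α 1| := by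
  have h1 : α 0 ≤ abar α m := by
    rw [abar]
    apply hα_mono (left_mem_Icc.mpr zero_le_one)
      ⟨le_max_left _ _, max_le zero_le_one (min_le_left _ _)⟩ (le_max_left _ _)
  have h2 : abar α m ≤ α 1 := by
    rw [abar]
    apply hα_mono ⟨le_max_left _ _, max_le zero_le_one (min_le_left _ _)⟩
      (right_mem_Icc.mpr zero_le_one)
      (max_le zero_le_one (min_le_left _ _))
  rw [abs_le]
  constructor
  · calc -(max |α 0| |α 1|) ≤ -|α 0| := by simp
      _ ≤ α 0 := neg_abs_le _
      _ ≤ _ := h1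
  · calc abar α m ≤ α 1 := h2
      _ ≤ |α 1| := le_abs_self _
      _ ≤ max |α 0| |α 1| := le_max_right _ _

lemma integrable_quantile_mul_alpha :
    Integrable (fun m => quantile ν m * α m) lebI := by
  have hmeq : (fun m => quantile ν m * abar α m) =ᵐ[lebI]
      (fun m => quantile ν m * α m) := by
    have : ∀ᵐ m ∂lebI, m ∈ Icc (0:ℝ) 1 := by
      rw [lebI]; exact ae_restrict_mem measurableSet_Icc
    filter_upwards [this] with m hm
    rw [abar_eq hm]
  refine Integrable.congr ?_ hmeq
  refine Integrable.mono' (integrable_const (max |A| |C| * max |α 0| |α 1|))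
    ((measurable_quantile hν hAC hsupp).mul (abar_mono hα_mono).measurable).aestronglyMeasurable ?_
  refine Filter.Eventually.of_forall (fun m => ?_)
  rw [Real.norm_eq_abs, abs_mul]
  exact mul_le_mul (abs_quantile_le hν hAC hsupp m) (abar_bound hν hAC hsupp hα_mono m)
    (abs_nonneg _) (le_trans (abs_nonneg A) (le_max_left _ _))

lemma quantile_mul_alpha_eq_sf :
    ∫ m in Icc (0:ℝ) 1, quantile ν m * α m
      = ∫ m in Icc (0:ℝ) 1, quantile ν m * (sf hα_mono) m := by
  rw [show volume.restrict (Icc (0:ℝ) 1) = lebI from rfl]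
  refine integral_congr_ae ?_
  filter_upwards [alpha_ae_sf hα_mono] with m hm
  rw [hm]

end mulint

end Stmt11Aux

open Stmt11Aux in
/-- for `b(x_1,...,x_d) = x_1 + ⋯ + x_d` on a product of compact real
intervals, the comonotone coupling `(F_{μ_1}⁻¹,...,F_{μ_d}⁻¹)_# Leb_{[0,1]}`
maximizes `γ ↦ R_α(b_# γ)` over `Γ(μ_1,...,μ_d)`, with maximal value
`∫_0^1 α(m) Σ_i F_{μ_i}⁻¹(m) dm = Σ_i R_α(μ_i)`. -/
theorem stmt11 (d : ℕ) (a c : Fin d → ℝ) (hac : ∀ i, a i ≤ c i)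
    (μ : Fin d → Measure ℝ) (hprob : ∀ i, IsProbabilityMeasure (μ i))
    (hsupp : ∀ i, μ i (Icc (a i) (c i)) = 1)
    (α : ℝ → ℝ) (hα_mono : MonotoneOn α (Icc 0 1))
    (hα_nonneg : ∀ m ∈ Icc (0:ℝ) 1, 0 ≤ α m)
    (b : (Fin d → ℝ) → ℝ) (hb : b = fun x => ∑ i, x i)
    (γ : Measure (Fin d → ℝ)) (hγ : γ = lebI.map (fun m i => quantile (μ i) m)) :
    (IsProbabilityMeasure γ ∧ ∀ i, γ.map (fun z => z i) = μ i) ∧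
    (∀ γ' : Measure (Fin d → ℝ), IsProbabilityMeasure γ' →
      (∀ i, γ'.map (fun z => z i) = μ i) →
      specRisk α (γ'.map b) ≤ specRisk α (γ.map b)) ∧
    (specRisk α (γ.map b) = ∫ m in Icc (0:ℝ) 1, α m * ∑ i, quantile (μ i) m) ∧
    ((∫ m in Icc (0:ℝ) 1, α m * ∑ i, quantile (μ i) m) = ∑ i, specRisk α (μ i)) := by
  classical
  subst hb hγ
  have hb_meas : Measurable (fun x : Fin d → ℝ => ∑ i, x i) :=
    Finset.univ.measurable_sum (fun i _ => measurable_pi_apply i)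
  set qf : ℝ → (Fin d → ℝ) := fun m i => quantile (μ i) m with hqf
  have hqf_meas : Measurable qf :=
    measurable_pi_lambda _ (fun i => measurable_quantile (hprob i) (hac i) (hsupp i))
  have hmarg : ∀ i, (lebI.map qf).map (fun z : Fin d → ℝ => z i) = μ i := by
    intro i
    rw [Measure.map_map (measurable_pi_apply i) hqf_meas]
    exact map_quantile (hprob i) (hac i) (hsupp i)
  set Q : ℝ → ℝ := fun m => ∑ i, quantile (μ i) m with hQ
  set A' := ∑ i, a i with hA'
  set C' := ∑ i, c i with hC'
  have hA'C' : A' ≤ C' := Finset.sum_le_sum (fun i _ => hac i)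
  have hQmeas : Measurable Q :=
    Finset.univ.measurable_sum (fun i _ => measurable_quantile (hprob i) (hac i) (hsupp i))
  have hQmono : ∀ m ∈ Ioc (0:ℝ) 1, ∀ m' ∈ Ioc (0:ℝ) 1, m ≤ m' → Q m ≤ Q m' :=
    fun m hm m' hm' hmm =>
      Finset.sum_le_sum (fun i _ => quantile_mono (hprob i) (hsupp i) hm.1 hmm hm'.2)
  have hQmem : ∀ m ∈ Ioc (0:ℝ) 1, Q m ∈ Icc A' C' := fun m hm =>
    ⟨Finset.sum_le_sum (fun i _ => le_quantile (hprob i) (hsupp i) hm.1 hm.2),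
     Finset.sum_le_sum (fun i _ => quantile_le_C (hprob i) (hac i) (hsupp i) hm.1 hm.2)⟩
  have hmapb : (lebI.map qf).map (fun x : Fin d → ℝ => ∑ i, x i) = lebI.map Q := by
    rw [Measure.map_map hb_meas hqf_meas]
    rfl
  have hae := quantile_map_ae hQmeas hA'C' hQmono hQmem
  have h3 : specRisk α ((lebI.map qf).map (fun x : Fin d → ℝ => ∑ i, x i))
      = ∫ m in Icc (0:ℝ) 1, α m * Q m := by
    rw [hmapb, specRisk, show volume.restrict (Icc (0:ℝ) 1) = lebI from rfl]
    refine integral_congr_ae ?_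
    filter_upwards [hae] with m hm
    rw [hm, mul_comm]
  have h4 : (∫ m in Icc (0:ℝ) 1, α m * Q m) = ∑ i, specRisk α (μ i) := by
    have hptw : (fun m => α m * Q m) = fun m => ∑ i, quantile (μ i) m * α m := by
      funext m
      rw [hQ, Finset.mul_sum]
      exact Finset.sum_congr rfl (fun i _ => mul_comm _ _)
    rw [hptw, show volume.restrict (Icc (0:ℝ) 1) = lebI from rfl,
      integral_finset_sum _
        (fun i _ => integrable_quantile_mul_alpha (hprob i) (hac i) (hsupp i) hα_mono)]
    rfl
  have hkey : ∀ γ' : Measure (Fin d → ℝ), IsProbabilityMeasure γ' →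
      (∀ i, γ'.map (fun z : Fin d → ℝ => z i) = μ i) →
      specRisk α (γ'.map (fun x : Fin d → ℝ => ∑ i, x i)) ≤ ∑ i, specRisk α (μ i) := by
    intro γ' hγ'p hγ'm
    set ν' := γ'.map (fun x : Fin d → ℝ => ∑ i, x i) with hν'
    haveI hν'p : IsProbabilityMeasure ν' := Measure.isProbabilityMeasure_map hb_meas.aemeasurable
    have hcompl : γ' ((univ.pi fun i => Icc (a i) (c i))ᶜ) = 0 := by
      have hsub : (univ.pi fun i => Icc (a i) (c i))ᶜ
          ⊆ ⋃ i, (fun z : Fin d → ℝ => z i) ⁻¹' (Icc (a i) (c i))ᶜ := by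
        intro z hz
        simp only [mem_compl_iff, Set.mem_pi, mem_univ, forall_true_left, not_forall] at hz
        obtain ⟨i, hi⟩ := hz
        exact mem_iUnion.mpr ⟨i, hi⟩
      refine measure_mono_null hsub (measure_iUnion_null (fun i => ?_))
      have h1 : γ'.map (fun z : Fin d → ℝ => z i) ((Icc (a i) (c i))ᶜ)
          = γ' ((fun z : Fin d → ℝ => z i) ⁻¹' (Icc (a i) (c i))ᶜ) :=
        Measure.map_apply (measurable_pi_apply i) measurableSet_Icc.compl
      rw [← h1, hγ'm i]
      exact compl_null (hprob i) (hsupp i)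
    have hpi : γ' (univ.pi fun i => Icc (a i) (c i)) = 1 := by
      have hms : MeasurableSet (univ.pi fun i => Icc (a i) (c i)) :=
        MeasurableSet.univ_pi (fun i => measurableSet_Icc)
      have h := measure_compl hms (measure_ne_top γ' _)
      rw [hcompl, measure_univ] at h
      have hge : (1:ENNReal) ≤ γ' (univ.pi fun i => Icc (a i) (c i)) := by
        rwa [eq_comm, tsub_eq_zero_iff_le] at h
      exact le_antisymm prob_le_one hge
    have hν'supp : ν' (Icc A' C') = 1 := by
      refine le_antisymm prob_le_one ?_
      rw [hν', Measure.map_apply hb_meas measurableSet_Icc]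
      have h2 : (univ.pi fun i => Icc (a i) (c i))
          ⊆ (fun x : Fin d → ℝ => ∑ i, x i) ⁻¹' Icc A' C' := by
        intro z hz
        simp only [Set.mem_pi, mem_univ, forall_true_left] at hz
        exact ⟨Finset.sum_le_sum (fun i _ => (hz i).1),
          Finset.sum_le_sum (fun i _ => (hz i).2)⟩
      calc (1:ENNReal) = γ' (univ.pi fun i => Icc (a i) (c i)) := hpi.symm
        _ ≤ γ' ((fun x : Fin d → ℝ => ∑ i, x i) ⁻¹' Icc A' C') := measure_mono h2
    have hconst_int : ∀ i, Integrable (fun z : Fin d → ℝ => z i) γ' := by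
      intro i
      have hid : Integrable (fun x : ℝ => x) (μ i) :=
        integrable_id_nu (hprob i) (hac i) (hsupp i)
      rw [← hγ'm i] at hid
      exact (integrable_map_measure aestronglyMeasurable_id
        (measurable_pi_apply i).aemeasurable).mp hid
    have hmean_i : ∀ i, ∫ z : Fin d → ℝ, z i ∂γ' = ∫ x, x ∂(μ i) := by
      intro i
      have h := integral_map (φ := fun z : Fin d → ℝ => z i) (μ := γ')
        (measurable_pi_apply i).aemeasurable (f := id) aestronglyMeasurable_id
      rw [hγ'm i] at h
      simpa using h.symm
    have hmean : ∫ x, x ∂ν' = ∑ i, ∫ x, x ∂(μ i) := by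
      rw [hν', show (fun x : ℝ => x) = id from rfl,
        integral_map hb_meas.aemeasurable aestronglyMeasurable_id]
      simp only [id_eq]
      rw [integral_finset_sum _ (fun i _ => hconst_int i)]
      exact Finset.sum_congr rfl (fun i _ => hmean_i i)
    have hpos_i : ∀ (i) (z : ℝ), ∫ y : Fin d → ℝ, max (y i - z) 0 ∂γ'
        = ∫ x, max (x - z) 0 ∂(μ i) := by
      intro i z
      have h := integral_map (φ := fun y : Fin d → ℝ => y i) (μ := γ')
        (measurable_pi_apply i).aemeasurable
        (f := fun x : ℝ => max (x - z) 0)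
        (((measurable_id.sub_const z).max measurable_const).aestronglyMeasurable)
      rw [hγ'm i] at h
      exact h.symm
    have hposint_i : ∀ (i) (z : ℝ),
        Integrable (fun y : Fin d → ℝ => max (y i - z) 0) γ' := by
      intro i z
      have hid : Integrable (fun x : ℝ => max (x - z) 0) (μ i) :=
        integrable_posPart_nu (hprob i) (hac i) (hsupp i) z
      rw [← hγ'm i] at hid
      exact (integrable_map_measure
        (((measurable_id.sub_const z).max measurable_const).aestronglyMeasurable)
        (measurable_pi_apply i).aemeasurable).mp hid
    have hES : ∀ t ∈ Ioc (0:ℝ) 1, ES t ν' ≤ ∑ i, ES t (μ i) := by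
      intro t ht
      set z := ∑ i, quantile (μ i) t with hz
      have h1 := ES_le_RU hν'p hA'C' hν'supp ht z
      have hint1 : Integrable (fun y : Fin d → ℝ => max ((∑ i, y i) - z) 0) γ' := by
        have h := integrable_posPart_nu hν'p hA'C' hν'supp z
        rw [hν'] at h
        exact (integrable_map_measure
          (((measurable_id.sub_const z).max measurable_const).aestronglyMeasurable)
          hb_meas.aemeasurable).mp h
      have h2 : ∫ x, max (x - z) 0 ∂ν' = ∫ y : Fin d → ℝ, max ((∑ i, y i) - z) 0 ∂γ' := by
        rw [hν', integral_map (f := fun x : ℝ => max (x - z) 0) hb_meas.aemeasurable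
          (((measurable_id.sub_const z).max measurable_const).aestronglyMeasurable)]
      have h3' : ∀ y : Fin d → ℝ, max ((∑ i, y i) - z) 0
          ≤ ∑ i, max (y i - quantile (μ i) t) 0 := by
        intro y
        rw [hz, ← Finset.sum_sub_distrib]
        exact max_le (Finset.sum_le_sum (fun i _ => le_max_left _ _))
          (Finset.sum_nonneg (fun i _ => le_max_right _ _))
      have h4' : ∫ y : Fin d → ℝ, max ((∑ i, y i) - z) 0 ∂γ'
          ≤ ∑ i, (ES t (μ i) - quantile (μ i) t * (1 - t)) := by
        calc ∫ y : Fin d → ℝ, max ((∑ i, y i) - z) 0 ∂γ'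
            ≤ ∫ y : Fin d → ℝ, (∑ i, max (y i - quantile (μ i) t) 0) ∂γ' :=
              integral_mono hint1 (integrable_finset_sum _ (fun i _ => hposint_i i _)) h3'
          _ = ∑ i, ∫ y : Fin d → ℝ, max (y i - quantile (μ i) t) 0 ∂γ' :=
              integral_finset_sum _ (fun i _ => hposint_i i _)
          _ = ∑ i, ∫ x, max (x - quantile (μ i) t) 0 ∂(μ i) :=
              Finset.sum_congr rfl (fun i _ => hpos_i i _)
          _ = ∑ i, (ES t (μ i) - quantile (μ i) t * (1 - t)) :=
              Finset.sum_congr rfl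
                (fun i _ => posPart_integral_eq (hprob i) (hac i) (hsupp i) ht)
      calc ES t ν' ≤ z * (1 - t) + ∫ x, max (x - z) 0 ∂ν' := h1
        _ ≤ z * (1 - t) + ∑ i, (ES t (μ i) - quantile (μ i) t * (1 - t)) := by
            rw [h2]; linarith [h4']
        _ = ∑ i, ES t (μ i) := by
            rw [hz, Finset.sum_sub_distrib, ← Finset.sum_mul]
            ring
    have hdec' := specRisk_decomp hν'p hA'C' hν'supp hα_mono
    have hdec_i := fun i => specRisk_decomp (hprob i) (hac i) (hsupp i) hα_mono
    have hstep : specRisk α ν'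
        = ∫ m in Icc (0:ℝ) 1, quantile ν' m * (sf hα_mono) m :=
      quantile_mul_alpha_eq_sf hν'p hA'C' hν'supp hα_mono
    have hstep_i : ∀ i, specRisk α (μ i)
        = ∫ m in Icc (0:ℝ) 1, quantile (μ i) m * (sf hα_mono) m :=
      fun i => quantile_mul_alpha_eq_sf (hprob i) (hac i) (hsupp i) hα_mono
    calc specRisk α ν'
        = (sf hα_mono) 0 * (∫ x, x ∂ν')
            + ∫ t in Ioc (0:ℝ) 1, ES t ν' ∂(sf hα_mono).measure := by
          rw [hstep]; exact hdec'.1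
      _ ≤ (sf hα_mono) 0 * (∫ x, x ∂ν')
            + ∫ t in Ioc (0:ℝ) 1, (∑ i, ES t (μ i)) ∂(sf hα_mono).measure := by
          refine add_le_add_right ?_ _
          refine setIntegral_mono_on hdec'.2
            (integrable_finset_sum _ (fun i _ => (hdec_i i).2)) measurableSet_Ioc hES
      _ = (sf hα_mono) 0 * (∑ i, ∫ x, x ∂(μ i))
            + ∑ i, ∫ t in Ioc (0:ℝ) 1, ES t (μ i) ∂(sf hα_mono).measure := by
          rw [hmean, integral_finset_sum _ (fun i _ => (hdec_i i).2)]
      _ = ∑ i, ((sf hα_mono) 0 * (∫ x, x ∂(μ i))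
            + ∫ t in Ioc (0:ℝ) 1, ES t (μ i) ∂(sf hα_mono).measure) := by
          rw [Finset.mul_sum, Finset.sum_add_distrib]
      _ = ∑ i, ∫ m in Icc (0:ℝ) 1, quantile (μ i) m * (sf hα_mono) m :=
          Finset.sum_congr rfl (fun i _ => ((hdec_i i).1).symm)
      _ = ∑ i, specRisk α (μ i) :=
          Finset.sum_congr rfl (fun i _ => (hstep_i i).symm)
  refine ⟨⟨Measure.isProbabilityMeasure_map hqf_meas.aemeasurable, hmarg⟩, ?_, h3, h4⟩
  intro γ' hγ'p hγ'm
  calc specRisk α (γ'.map (fun x : Fin d → ℝ => ∑ i, x i))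
      ≤ ∑ i, specRisk α (μ i) := hkey γ' hγ'p hγ'm
    _ = specRisk α ((lebI.map qf).map (fun x : Fin d → ℝ => ∑ i, x i)) := by
        rw [h3, h4]
end
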